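/- arXiv:2208.05601 — 9 statements merged into one kernel-verified Lean document; each statement's English description precedes it below -/
import Mathlib

section
/- Fix t ≥ 1 and m ≥ 1, and let δ ∈ 𝔽₂^m with δ = η₁ 1 η₂ 1 ⋯ 1 η_c as a decomposition into zero-runs separated by ones. For a zero-run η_j of length γ_j > 0 define α_j and β_j as the minimum numbers of fault vectors (basis vectors e_i or adjacent sums e_i + e_{i+1}) needed to produce the substrings of δ before and after the block 1η_j1 respectively. If α_j + β_j + γ_j < t, then there exists a decomposition of δ as a sum of at most t fault vectors in which every position of the run η_j is covered by the support of some fault vector (i.e., all zeros of η_j are XOR zeros). -/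
/-- A fault vector's support on `m` positions: empty, a singleton, or an adjacent pair. -/
def IsFaultSupp (m : ℕ) (s : Finset ℕ) : Prop :=
  s = ∅ ∨ (∃ i, i < m ∧ s = {i}) ∨ (∃ i, i + 1 < m ∧ s = ({i, i + 1} : Finset ℕ))

/-- A nonzero fault support lying inside the segment `[lo, lo + len)`. -/
def SegFault (lo len : ℕ) (s : Finset ℕ) : Prop :=
  (∃ i, lo ≤ i ∧ i < lo + len ∧ s = {i}) ∨
  (∃ i, lo ≤ i ∧ i + 1 < lo + len ∧ s = ({i, i + 1} : Finset ℕ))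

/-- `F` is a list of fault vectors inside the segment starting at `lo` producing the
substring `L` over `𝔽₂`. -/
def ProducesSeg (lo : ℕ) (L : List Bool) (F : List (Finset ℕ)) : Prop :=
  (∀ s ∈ F, SegFault lo L.length s) ∧
  ∀ p, (if L.getD p false = true then (1 : ZMod 2) else 0)
      = (F.countP (fun s => decide (lo + p ∈ s)) : ℕ)

/- ----------------- auxiliary lemmas ----------------- -/

lemma cnt_pairs (a n q : ℕ) :
    (((List.range n).map fun k => ({a + k, a + k + 1} : Finset ℕ)).countP
      (fun s => decide (q ∈ s)))
    = (if a ≤ q ∧ q < a + n then 1 else 0)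
      + (if a + 1 ≤ q ∧ q < a + n + 1 then 1 else 0) := by
  induction n with
  | zero =>
    simp only [List.range_zero, List.map_nil, List.countP_nil]
    split_ifs <;> first | contradiction | omega
  | succ n ih =>
    rw [List.range_succ, List.map_append, List.countP_append, ih]
    simp only [List.map_cons, List.map_nil, List.countP_cons, List.countP_nil,
      Finset.mem_insert, Finset.mem_singleton, decide_eq_true_eq]
    split_ifs <;> simp_all <;> omega

lemma segFault_mem {lo len : ℕ} {s : Finset ℕ} (h : SegFault lo len s) :
    ∀ q ∈ s, lo ≤ q ∧ q < lo + len := by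
  intro q hq
  rcases h with ⟨i, h1, h2, rfl⟩ | ⟨i, h1, h2, rfl⟩
  · simp only [Finset.mem_singleton] at hq; omega
  · simp only [Finset.mem_insert, Finset.mem_singleton] at hq; rcases hq with rfl | rfl <;> omega

lemma countP_mem_zero (F : List (Finset ℕ)) (p : ℕ) (h : ∀ s ∈ F, p ∉ s) :
    F.countP (fun s => decide (p ∈ s)) = 0 :=
  List.countP_eq_zero.mpr (by simpa using h)

lemma glue {lo : ℕ} {P Q : List Bool} {FP FQ : List (Finset ℕ)}
    (hP : ProducesSeg lo P FP) (hQ : ProducesSeg (lo + P.length) Q FQ) :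
    ProducesSeg lo (P ++ Q) (FP ++ FQ) := by
  constructor
  · intro s hs
    rcases List.mem_append.1 hs with h | h
    · rcases hP.1 s h with ⟨i, h1, h2, rfl⟩ | ⟨i, h1, h2, rfl⟩
      · exact Or.inl ⟨i, h1, by simp <;> omega, rfl⟩
      · exact Or.inr ⟨i, h1, by simp <;> omega, rfl⟩
    · rcases hQ.1 s h with ⟨i, h1, h2, rfl⟩ | ⟨i, h1, h2, rfl⟩
      · exact Or.inl ⟨i, by omega, by simp <;> omega, rfl⟩
      · exact Or.inr ⟨i, by omega, by simp <;> omega, rfl⟩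
  · intro p
    rw [List.countP_append]
    by_cases hp : p < P.length
    · have h0 : FQ.countP (fun s => decide (lo + p ∈ s)) = 0 := by
        apply countP_mem_zero
        intro s hs hq
        have := segFault_mem (hQ.1 s hs) _ hq
        omega
      have hval : (P ++ Q).getD p false = P.getD p false := by
        rw [List.getD_eq_getElem?_getD, List.getElem?_append_left hp,
          ← List.getD_eq_getElem?_getD]
      rw [h0, hval, Nat.add_zero]
      exact hP.2 p
    · push_neg at hp
      have h0 : FP.countP (fun s => decide (lo + p ∈ s)) = 0 := by
        apply countP_mem_zero
        intro s hs hq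
        have := segFault_mem (hP.1 s hs) _ hq
        omega
      have hval : (P ++ Q).getD p false = Q.getD (p - P.length) false := by
        rw [List.getD_eq_getElem?_getD, List.getElem?_append_right hp,
          ← List.getD_eq_getElem?_getD]
      have hidx : lo + P.length + (p - P.length) = lo + p := by omega
      rw [h0, hval, Nat.zero_add]
      have := hQ.2 (p - P.length)
      rwa [hidx] at this
  
lemma getD_rep (γ p : ℕ) : (List.replicate γ false).getD p false = false := by
  rw [List.getD_eq_getElem?_getD, List.getElem?_replicate]
  split <;> rfl

lemma getD_rep_true (γ p : ℕ) :
    ((List.replicate γ false ++ [true]).getD p false) = decide (p = γ) := by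
  rw [List.getD_eq_getElem?_getD, List.getElem?_append]
  simp only [List.length_replicate]
  split
  · rename_i h
    rw [List.getElem?_replicate, if_pos h]
    simp [show p ≠ γ by omega]
  · rename_i h
    push_neg at h
    rw [List.getElem?_cons]
    split
    · rename_i h2
      simp [show p = γ by omega]
    · rename_i h2
      simp [show p ≠ γ by omega]

lemma zmod2_of_parity {P : Prop} [Decidable P] {c : ℕ}
    (h : c % 2 = if P then 1 else 0) :
    (if P then (1 : ZMod 2) else 0) = (c : ZMod 2) := by
  have h2 : ((c % 2 : ℕ) : ZMod 2) = (c : ZMod 2) := ZMod.natCast_mod c 2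
  rw [← h2, h]
  split_ifs <;> simp

lemma mid_produces (a γ : ℕ) (hγ : 0 < γ) (leftOne rightOne : Bool) :
    ∃ Fm : List (Finset ℕ), Fm.length = γ + 1 ∧
      ProducesSeg a ((if leftOne then [true] else []) ++ List.replicate γ false
        ++ (if rightOne then [true] else [])) Fm ∧
      ∀ p, a ≤ p →
        p < a + (if leftOne then 1 else 0) + γ + (if rightOne then 1 else 0) →
        ∃ s ∈ Fm, p ∈ s := by
  cases leftOne <;> cases rightOne <;> simp only [if_true, if_false, List.nil_append,
    List.append_nil, List.singleton_append, List.cons_append, Bool.false_eq_true,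
    Bool.true_eq_false]
  · -- FF : replicate γ false
    refine ⟨({a} : Finset ℕ) :: (((List.range (γ-1)).map
        fun k => ({a + k, a + k + 1} : Finset ℕ)) ++ [({a + (γ-1)} : Finset ℕ)]), ?_, ⟨?_, ?_⟩, ?_⟩
    · simp <;> omega
    · intro s hs
      simp only [List.mem_cons, List.mem_append, List.mem_map, List.mem_range,
        List.not_mem_nil, or_false] at hs
      rcases hs with rfl | ⟨⟨k, hk, rfl⟩ | rfl⟩
      · exact Or.inl ⟨a, le_refl _, by simp <;> omega, rfl⟩
      · exact Or.inr ⟨a + k, by omega, by simp <;> omega, rfl⟩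
      · exact Or.inl ⟨a + (γ-1), by omega, by simp <;> omega, rfl⟩
    · intro p
      rw [List.countP_cons, List.countP_append, cnt_pairs]
      rw [getD_rep]
      apply zmod2_of_parity
      simp only [List.countP_cons, List.countP_nil, Finset.mem_singleton, decide_eq_true_eq]
      split_ifs <;> first | contradiction | omega
    · intro p hp1 hp2
      by_cases h : p = a
      · exact ⟨{a}, by simp, by simp [h]⟩
      · refine ⟨{a + (p - a - 1), a + (p - a - 1) + 1}, ?_, ?_⟩
        · exact List.mem_cons_of_mem _ (List.mem_append_left _
            (List.mem_map.mpr ⟨p - a - 1, List.mem_range.mpr (by omega), rfl⟩))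
        · simp only [Finset.mem_insert, Finset.mem_singleton]; omega
  · -- FT : replicate γ false ++ [true]
    refine ⟨({a} : Finset ℕ) :: ((List.range γ).map
        fun k => ({a + k, a + k + 1} : Finset ℕ)), ?_, ⟨?_, ?_⟩, ?_⟩
    · simp
    · intro s hs
      simp only [List.mem_cons, List.mem_map, List.mem_range] at hs
      rcases hs with rfl | ⟨k, hk, rfl⟩
      · exact Or.inl ⟨a, le_refl _, by simp <;> omega, rfl⟩
      · exact Or.inr ⟨a + k, by omega, by simp <;> omega, rfl⟩
    · intro p
      rw [List.countP_cons, cnt_pairs, getD_rep_true]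
      apply zmod2_of_parity
      simp only [Finset.mem_singleton, decide_eq_true_eq]
      split_ifs <;> first | contradiction | omega
    · intro p hp1 hp2
      by_cases h : p = a
      · exact ⟨{a}, by simp, by simp [h]⟩
      · refine ⟨{a + (p - a - 1), a + (p - a - 1) + 1}, ?_, ?_⟩
        · exact List.mem_cons_of_mem _
            (List.mem_map.mpr ⟨p - a - 1, List.mem_range.mpr (by omega), rfl⟩)
        · simp only [Finset.mem_insert, Finset.mem_singleton]; omega
  · -- TF : true :: replicate γ false
    refine ⟨(((List.range γ).map fun k => ({a + k, a + k + 1} : Finset ℕ)))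
        ++ [({a + γ} : Finset ℕ)], ?_, ⟨?_, ?_⟩, ?_⟩
    · simp
    · intro s hs
      simp only [List.mem_append, List.mem_map, List.mem_range, List.mem_cons,
        List.not_mem_nil, or_false] at hs
      rcases hs with ⟨k, hk, rfl⟩ | rfl
      · exact Or.inr ⟨a + k, by omega, by simp <;> omega, rfl⟩
      · exact Or.inl ⟨a + γ, by omega, by simp <;> omega, rfl⟩
    · intro p
      rw [List.countP_append, cnt_pairs]
      cases p with
      | zero =>
        simp only [List.getD_cons_zero]
        apply zmod2_of_parity
        simp only [List.countP_cons, List.countP_nil, Finset.mem_singleton, decide_eq_true_eq]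
        split_ifs <;> first | contradiction | omega
      | succ q =>
        simp only [List.getD_cons_succ, getD_rep]
        apply zmod2_of_parity
        simp only [List.countP_cons, List.countP_nil, Finset.mem_singleton, decide_eq_true_eq]
        split_ifs <;> first | contradiction | omega
    · intro p hp1 hp2
      by_cases h : p - a < γ
      · refine ⟨{a + (p - a), a + (p - a) + 1}, ?_, ?_⟩
        · exact List.mem_append_left _
            (List.mem_map.mpr ⟨p - a, List.mem_range.mpr h, rfl⟩)
        · simp only [Finset.mem_insert, Finset.mem_singleton]; omega
      · exact ⟨{a + γ}, List.mem_append_right _ (by simp),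
          by simp only [Finset.mem_singleton]; omega⟩
  · -- TT : true :: (replicate γ false ++ [true])
    refine ⟨((List.range (γ+1)).map fun k => ({a + k, a + k + 1} : Finset ℕ)), ?_, ⟨?_, ?_⟩, ?_⟩
    · simp
    · intro s hs
      simp only [List.mem_map, List.mem_range] at hs
      rcases hs with ⟨k, hk, rfl⟩
      exact Or.inr ⟨a + k, by omega, by simp <;> omega, rfl⟩
    · intro p
      rw [cnt_pairs]
      cases p with
      | zero =>
        simp only [List.getD_cons_zero]
        apply zmod2_of_parity
        split_ifs <;> first | contradiction | omega
      | succ q =>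
        simp only [List.getD_cons_succ, getD_rep_true]
        apply zmod2_of_parity
        simp only [decide_eq_true_eq]
        split_ifs <;> first | contradiction | omega
    · intro p hp1 hp2
      by_cases h : p - a < γ + 1
      · refine ⟨{a + (p - a), a + (p - a) + 1}, ?_, ?_⟩
        · exact List.mem_map.mpr ⟨p - a, List.mem_range.mpr h, rfl⟩
        · simp only [Finset.mem_insert, Finset.mem_singleton]; omega
      · refine ⟨{a + γ, a + γ + 1}, ?_, ?_⟩
        · exact List.mem_map.mpr ⟨γ, List.mem_range.mpr (by omega), rfl⟩
        · simp only [Finset.mem_insert, Finset.mem_singleton]; omega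

/-- Completeness direction of Theorem 1: if `α + β + γ < t`, where `α` and `β` are the
minimum numbers of fault vectors producing the substrings before and after the block,
then the difference vector has a decomposition into at most `t` fault vectors covering
every position of the zero-run (all zeros of the run are XOR zeros). -/
theorem unusable_run_complete (t m : ℕ) (ht : 1 ≤ t)
    (L : List Bool) (hL : L.length = m)
    (A B : List Bool) (γ : ℕ) (hγ : 0 < γ) (leftOne rightOne : Bool)
    (hsplit : L = A ++ (if leftOne then [true] else []) ++ List.replicate γ false
        ++ (if rightOne then [true] else []) ++ B)
    (hA : leftOne = false → A = []) (hB : rightOne = false → B = [])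
    (α β : ℕ)
    (hα : IsLeast {k | ∃ F : List (Finset ℕ), F.length = k ∧ ProducesSeg 0 A F} α)
    (hβ : IsLeast {k | ∃ F : List (Finset ℕ), F.length = k ∧
        ProducesSeg (A.length + (if leftOne then 1 else 0) + γ
          + (if rightOne then 1 else 0)) B F} β)
    (hlt : α + β + γ < t) :
    ∃ F : List (Finset ℕ), F.length ≤ t ∧ (∀ s ∈ F, IsFaultSupp m s) ∧
      (∀ p, (if L.getD p false = true then (1 : ZMod 2) else 0)
          = (F.countP (fun s => decide (p ∈ s)) : ℕ)) ∧
      ∀ p, A.length + (if leftOne then 1 else 0) ≤ p →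
        p < A.length + (if leftOne then 1 else 0) + γ → ∃ s ∈ F, p ∈ s := by
  obtain ⟨⟨FA, hFAlen, hFAprod⟩, -⟩ := hα
  obtain ⟨⟨FB, hFBlen, hFBprod⟩, -⟩ := hβ
  obtain ⟨Fm, hFmlen, hFmprod, hFmcov⟩ := mid_produces A.length γ hγ leftOne rightOne
  set Mid : List Bool := (if leftOne then [true] else []) ++ List.replicate γ false
      ++ (if rightOne then [true] else []) with hMid
  have hMidlen : Mid.length = (if leftOne then 1 else 0) + γ + (if rightOne then 1 else 0) := by
    rw [hMid]; cases leftOne <;> cases rightOne <;> simp <;> omega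
  have hsplit' : L = A ++ (Mid ++ B) := by
    rw [hsplit, hMid]; simp [List.append_assoc]
  have hFBprod' : ProducesSeg (A.length + Mid.length) B FB := by
    rw [hMidlen]
    have : A.length + ((if leftOne then 1 else 0) + γ + (if rightOne then 1 else 0))
        = A.length + (if leftOne then 1 else 0) + γ + (if rightOne then 1 else 0) := by omega
    rw [this]; exact hFBprod
  have h1 : ProducesSeg A.length (Mid ++ B) (Fm ++ FB) := glue hFmprod hFBprod'
  have h2 : ProducesSeg 0 (A ++ (Mid ++ B)) (FA ++ (Fm ++ FB)) := by
    apply glue hFAprod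
    simpa using h1
  have hmlen : (A ++ (Mid ++ B)).length = m := by rw [← hsplit', hL]
  refine ⟨FA ++ (Fm ++ FB), ?_, ?_, ?_, ?_⟩
  · simp only [List.length_append, hFAlen, hFmlen, hFBlen]; omega
  · intro s hs
    have := h2.1 s hs
    rw [hmlen] at this
    rcases this with ⟨i, h1', h2', rfl⟩ | ⟨i, h1', h2', rfl⟩
    · exact Or.inr (Or.inl ⟨i, by omega, rfl⟩)
    · exact Or.inr (Or.inr ⟨i, by omega, rfl⟩)
  · intro p
    have := h2.2 p
    rw [← hsplit'] at this
    simpa using this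
  · intro p hp1 hp2
    obtain ⟨s, hs, hps⟩ := hFmcov p (by omega) (by omega)
    exact ⟨s, List.mem_append_right _ (List.mem_append_left _ hs), hps⟩
end

section
/- Fix an even integer t ≥ 2. The maximum length of a binary string δ with the following property is ((t+2)/2)·((t+4)/2) − 3: writing δ = η₁ 1 η₂ 1 ⋯ 1 η_c as zero-runs separated by ones, every zero-run η_j of positive length γ_j satisfies α_j + β_j + γ_j ≤ t − 1, where α_j (resp. β_j) is the number of non-overlapping 11 substrings plus remaining single ones strictly before (resp. after) the block 1η_j1 (with α₁ = 0 and β_c = 0). -/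
/-- Greedy count of non-overlapping `11` substrings plus remaining single ones. -/
def onesCount : List Bool → ℕ
  | [] => 0
  | false :: l => onesCount l
  | [true] => 1
  | true :: _ :: l => 1 + onesCount l

/-- Every zero-run of positive length `γ` in the string satisfies `α + β + γ ≤ t - 1`,
where `α` (resp. `β`) counts non-overlapping `11` substrings plus remaining ones strictly
before (resp. after) the block `1 0^γ 1` (with boundary conventions `α₁ = 0`, `β_c = 0`). -/
def NoUsableRun (t : ℕ) (L : List Bool) : Prop :=
  (∀ A B γ, 0 < γ → L = A ++ [true] ++ List.replicate γ false ++ [true] ++ B →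
      onesCount A + onesCount B + γ ≤ t - 1) ∧
  (∀ B γ, 0 < γ → L = List.replicate γ false ++ [true] ++ B → onesCount B + γ ≤ t - 1) ∧
  (∀ A γ, 0 < γ → L = A ++ [true] ++ List.replicate γ false → onesCount A + γ ≤ t - 1) ∧
  (∀ γ, 0 < γ → L = List.replicate γ false → γ ≤ t - 1)

namespace NUR

def zeros (g : ℕ) : List Bool := List.replicate g false
def ones (b : ℕ) : List Bool := List.replicate b true

lemma zeros_succ (g : ℕ) : zeros (g+1) = false :: zeros g := rfl
lemma ones_succ (b : ℕ) : ones (b+1) = true :: ones b := rfl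

lemma oc_false (l : List Bool) : onesCount (false :: l) = onesCount l := rfl

lemma oc_zeros_append (g : ℕ) (l : List Bool) :
    onesCount (zeros g ++ l) = onesCount l := by
  induction g with
  | zero => rfl
  | succ n ih => simpa [zeros_succ, oc_false] using ih

lemma oc_zeros (g : ℕ) : onesCount (zeros g) = 0 := by
  simpa [onesCount] using oc_zeros_append g []

/-- `l` is empty or starts with `false`. -/
def SF (l : List Bool) : Prop := l = [] ∨ ∃ l', l = false :: l'

lemma oc_ones_append : ∀ (b : ℕ) (l : List Bool), SF l →
    onesCount (ones b ++ l) = (b+1)/2 + onesCount l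
  | 0, l, _ => by simp [ones]
  | 1, l, h => by
      rcases h with rfl | ⟨l', rfl⟩
      · rfl
      · rfl
  | (b+2), l, h => by
      have ih := oc_ones_append b l h
      have e : ones (b+2) ++ l = true :: true :: (ones b ++ l) := rfl
      rw [e, show onesCount (true :: true :: (ones b ++ l)) = 1 + onesCount (ones b ++ l) from rfl, ih]
      omega

lemma oc_ones (b : ℕ) : onesCount (ones b) = (b+1)/2 := by
  simpa [onesCount] using oc_ones_append b [] (Or.inl rfl)

def body : List (ℕ × ℕ) → List Bool
  | [] => []
  | x :: r => zeros x.1 ++ (ones x.2 ++ body r)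

def ocS : List (ℕ × ℕ) → ℕ
  | [] => 0
  | x :: r => (x.2+1)/2 + ocS r

def zS : List (ℕ × ℕ) → ℕ
  | [] => 0
  | x :: r => x.1 + zS r

def bS : List (ℕ × ℕ) → ℕ
  | [] => 0
  | x :: r => x.2 + bS r

def Esum : ℕ → List (ℕ × ℕ) → ℕ
  | _, [] => 0
  | pb, x :: r => pb % 2 + x.2 % 2 + Esum x.2 r

def prevb (b0 : ℕ) : List (ℕ × ℕ) → ℕ
  | [] => b0
  | x :: r => prevb x.2 r

lemma prevb_concat (b0 : ℕ) : ∀ (q : List (ℕ × ℕ)) (x : ℕ × ℕ), prevb b0 (q ++ [x]) = x.2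
  | [], x => rfl
  | y :: q, x => prevb_concat y.2 q x

lemma body_append : ∀ (l₁ l₂ : List (ℕ × ℕ)), body (l₁ ++ l₂) = body l₁ ++ body l₂
  | [], l₂ => rfl
  | x :: r, l₂ => by simp [body, body_append r l₂]

lemma ocS_append : ∀ (l₁ l₂ : List (ℕ × ℕ)), ocS (l₁ ++ l₂) = ocS l₁ + ocS l₂
  | [], l₂ => by simp [ocS]
  | x :: r, l₂ => by simp [ocS, ocS_append r l₂]; ring

lemma len_body : ∀ ps : List (ℕ × ℕ), (body ps).length = zS ps + bS ps
  | [] => rfl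
  | x :: r => by simp [body, zS, bS, zeros, ones, len_body r]; ring

lemma sf_body (ps : List (ℕ × ℕ)) (hg : ∀ x ∈ ps, 0 < x.1) : SF (body ps) := by
  cases ps with
  | nil => exact Or.inl rfl
  | cons x r =>
      obtain ⟨g1, b1⟩ := x
      have := hg (g1, b1) (by simp)
      obtain ⟨g, rfl⟩ : ∃ g, g1 = g + 1 := ⟨g1 - 1, by omega⟩
      right
      exact ⟨zeros g ++ (ones b1 ++ body r), by simp [body, zeros_succ]⟩

lemma sf_append {l₁ l₂ : List Bool} (h₁ : SF l₁) (h₂ : SF l₂) : SF (l₁ ++ l₂) := by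
  rcases h₁ with rfl | ⟨l', rfl⟩
  · simpa using h₂
  · exact Or.inr ⟨l' ++ l₂, rfl⟩

lemma oc_body_append : ∀ (ps : List (ℕ × ℕ)) (l : List Bool), (∀ x ∈ ps, 0 < x.1) → SF l →
    onesCount (body ps ++ l) = ocS ps + onesCount l
  | [], l, _, _ => by simp [body, ocS]
  | x :: r, l, hg, hl => by
      have hr : ∀ y ∈ r, 0 < y.1 := fun y hy => hg y (by simp [hy])
      have h1 : SF (body r ++ l) := sf_append (sf_body r hr) hl
      have : body (x :: r) ++ l = zeros x.1 ++ (ones x.2 ++ (body r ++ l)) := by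
        simp [body]
      rw [this, oc_zeros_append, oc_ones_append _ _ h1, oc_body_append r l hr hl, ocS]
      ring

lemma oc_body (ps : List (ℕ × ℕ)) (hg : ∀ x ∈ ps, 0 < x.1) :
    onesCount (body ps) = ocS ps := by
  simpa [onesCount] using oc_body_append ps [] hg (Or.inl rfl)

lemma decomp (L : List Bool) : ∃ b0 ps, L = ones b0 ++ body ps ∧
    (∀ x ∈ ps, 0 < x.1) ∧ (∀ x ∈ ps.dropLast, 0 < x.2) := by
  induction L with
  | nil => exact ⟨0, [], rfl, by simp, by simp⟩
  | cons a L ih =>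
    obtain ⟨b0, ps, rfl, hg, hb⟩ := ih
    cases a
    · match b0, ps with
      | 0, [] => exact ⟨0, [(1,0)], by simp [ones, body, zeros], by simp, by simp⟩
      | 0, (g, b) :: r =>
          refine ⟨0, (g+1, b) :: r, by simp [ones, body, zeros_succ], ?_, ?_⟩
          · intro x hx
            rcases List.mem_cons.1 hx with rfl | hx
            · simp
            · exact hg x (by simp [hx])
          · intro x hx
            cases r with
            | nil => simp at hx
            | cons y r' =>
                rcases List.mem_cons.1 (by simpa [List.dropLast] using hx) with rfl | hx'
                · exact hb (g, b) (by simp [List.dropLast])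
                · exact hb x (by simp [List.dropLast, hx'])
      | (b0+1), ps =>
          refine ⟨0, (1, b0+1) :: ps, by simp [ones, body, zeros, ones_succ], by
            intro x hx
            rcases List.mem_cons.1 hx with rfl | hx
            · simp
            · exact hg x hx, ?_⟩
          intro x hx
          cases ps with
          | nil => simp at hx
          | cons y r' =>
              rcases List.mem_cons.1 (by simpa [List.dropLast] using hx) with rfl | hx'
              · simp
              · exact hb x (by simpa [List.dropLast] using hx')
    · exact ⟨b0+1, ps, by simp [ones_succ], hg, hb⟩

lemma run_constraint (t b0 : ℕ) (ps₁ ps₂ : List (ℕ × ℕ)) (g b : ℕ)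
    (hg : ∀ x ∈ ps₁ ++ (g,b) :: ps₂, 0 < x.1)
    (hb : ∀ x ∈ (ps₁ ++ (g,b) :: ps₂).dropLast, 0 < x.2)
    (H : NoUsableRun t (ones b0 ++ body (ps₁ ++ (g,b) :: ps₂))) :
    g + ((b0+1)/2 + ocS (ps₁ ++ (g,b) :: ps₂)) ≤ (t-1) + (prevb b0 ps₁) % 2 + b % 2 := by
  have hgpos : 0 < g := hg (g,b) (by simp)
  have hg2 : ∀ x ∈ ps₂, 0 < x.1 := fun x hx => hg x (by simp [hx])
  have hbpos : ps₂ ≠ [] → 0 < b := by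
    intro hne
    apply hb (g,b)
    rw [List.dropLast_append_of_ne_nil (List.cons_ne_nil _ _)]
    cases ps₂ with
    | nil => exact absurd rfl hne
    | cons y r => simp
  have hps1 : ∀ x ∈ ps₁, 0 < x.2 := fun x hx => by
    apply hb x
    rw [List.dropLast_append_of_ne_nil (List.cons_ne_nil _ _)]
    exact List.mem_append_left _ hx
  rcases List.eq_nil_or_concat ps₁ with rfl | ⟨q, x, hx⟩
  · -- ps₁ = []
    rcases Nat.eq_zero_or_pos b0 with rfl | hb0
    · rcases Nat.eq_zero_or_pos b with rfl | hbp
      · have hps2 : ps₂ = [] := by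
          cases ps₂ with
          | nil => rfl
          | cons y r => exact absurd (hbpos (by simp)) (by simp)
        subst hps2
        have h4 := H.2.2.2 g hgpos (by simp [ones, body, zeros])
        simp only [List.nil_append, ocS, prevb]
        omega
      · obtain ⟨k, rfl⟩ : ∃ k, b = k + 1 := ⟨b - 1, by omega⟩
        have hB := H.2.1 (ones k ++ body ps₂) g hgpos (by
          simp [ones, body, zeros, List.replicate_succ])
        rw [oc_ones_append k _ (sf_body ps₂ hg2), oc_body ps₂ hg2] at hB
        simp only [List.nil_append, ocS, prevb]
        omega
    · obtain ⟨m, rfl⟩ : ∃ m, b0 = m + 1 := ⟨b0 - 1, by omega⟩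
      have e1 : ones (m+1) = ones m ++ [true] := List.replicate_succ'
      rcases Nat.eq_zero_or_pos b with rfl | hbp
      · have hps2 : ps₂ = [] := by
          cases ps₂ with
          | nil => rfl
          | cons y r => exact absurd (hbpos (by simp)) (by simp)
        subst hps2
        have h3 := H.2.2.1 (ones m) g hgpos (by
          simp [body, zeros, ones, List.replicate_succ', List.append_assoc])
        rw [oc_ones] at h3
        simp only [List.nil_append, ocS, prevb]
        omega
      · obtain ⟨k, rfl⟩ : ∃ k, b = k + 1 := ⟨b - 1, by omega⟩
        have e2 : ones (k+1) = true :: ones k := rfl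
        have h1 := H.1 (ones m) (ones k ++ body ps₂) g hgpos (by
          simp only [List.nil_append, body, e1, e2]
          simp [List.append_assoc, zeros, ones])
        rw [oc_ones_append k _ (sf_body ps₂ hg2), oc_body ps₂ hg2, oc_ones] at h1
        simp only [List.nil_append, ocS, prevb]
        omega
  · rw [List.concat_eq_append] at hx
    subst hx
    obtain ⟨g', b'⟩ := x
    have hg' : 0 < g' := hg (g',b') (by simp)
    have hb' : 0 < b' := hps1 (g',b') (by simp)
    obtain ⟨m, rfl⟩ : ∃ m, b' = m + 1 := ⟨b' - 1, by omega⟩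
    obtain ⟨j, rfl⟩ : ∃ j, g' = j + 1 := ⟨g' - 1, by omega⟩
    have hgq : ∀ x ∈ q, 0 < x.1 := fun x hx => hg x (by simp [hx])
    have e1 : ones (m+1) = ones m ++ [true] := List.replicate_succ'
    have sf2 : SF (zeros (j+1) ++ ones m) := Or.inr ⟨zeros j ++ ones m, by simp [zeros_succ]⟩
    have sf1 : SF (body q ++ (zeros (j+1) ++ ones m)) := sf_append (sf_body q hgq) sf2
    have hA : onesCount (ones b0 ++ (body q ++ (zeros (j+1) ++ ones m)))
        = (b0+1)/2 + (ocS q + (m+1)/2) := by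
      rw [oc_ones_append b0 _ sf1, oc_body_append q _ hgq sf2, oc_zeros_append, oc_ones]
    rw [prevb_concat]
    have hocs : ocS ((q ++ [(j+1, m+1)]) ++ (g, b) :: ps₂)
        = ocS q + (m+2)/2 + (b+1)/2 + ocS ps₂ := by
      rw [ocS_append, ocS_append]
      simp [ocS]
      omega
    rcases Nat.eq_zero_or_pos b with rfl | hbp
    · have hps2 : ps₂ = [] := by
        cases ps₂ with
        | nil => rfl
        | cons y r => exact absurd (hbpos (by simp)) (by simp)
      subst hps2
      have h3 := H.2.2.1 (ones b0 ++ (body q ++ (zeros (j+1) ++ ones m))) g hgpos (by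
        simp only [body_append, body, e1]
        simp [List.append_assoc, zeros, ones])
      rw [hA] at h3
      rw [hocs]
      simp only [ocS]
      omega
    · obtain ⟨k, rfl⟩ : ∃ k, b = k + 1 := ⟨b - 1, by omega⟩
      have e2 : ones (k+1) = true :: ones k := rfl
      have h1 := H.1 (ones b0 ++ (body q ++ (zeros (j+1) ++ ones m))) (ones k ++ body ps₂) g
        hgpos (by
          simp only [body_append, body, e1, e2]
          simp [List.append_assoc, zeros, ones])
      rw [oc_ones_append k _ (sf_body ps₂ hg2), oc_body ps₂ hg2, hA] at h1
      rw [hocs]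
      omega

lemma sumind (t b0 : ℕ) : ∀ (ps₂ ps₁ : List (ℕ × ℕ)),
    (∀ x ∈ ps₁ ++ ps₂, 0 < x.1) → (∀ x ∈ (ps₁ ++ ps₂).dropLast, 0 < x.2) →
    NoUsableRun t (ones b0 ++ body (ps₁ ++ ps₂)) →
    zS ps₂ + ps₂.length * ((b0+1)/2 + ocS (ps₁ ++ ps₂))
      ≤ ps₂.length * (t-1) + Esum (prevb b0 ps₁) ps₂ := by
  intro ps₂
  induction ps₂ with
  | nil => intro ps₁ _ _ _; simp [zS, Esum]
  | cons x r ih =>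
    obtain ⟨g, b⟩ := x
    intro ps₁ hg hb H
    have hrc := run_constraint t b0 ps₁ r g b hg hb H
    have hIH := ih (ps₁ ++ [(g,b)]) (by simpa using hg) (by simpa using hb)
      (by simpa using H)
    rw [prevb_concat] at hIH
    simp only [List.append_assoc, List.singleton_append] at hIH
    simp only [zS, Esum, List.length_cons, Nat.succ_mul]
    have h1 : r.length * ((b0+1)/2 + ocS (ps₁ ++ (g, b) :: r)) ≤ r.length * (t-1) + Esum b r := by
      calc r.length * ((b0+1)/2 + ocS (ps₁ ++ (g, b) :: r))
          = zS r + r.length * ((b0+1)/2 + ocS (ps₁ ++ (g, b) :: r)) - zS r := by omega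
        _ ≤ r.length * (t-1) + Esum b r := by omega
    linarith [hrc, hIH]

lemma esum_bound : ∀ (ps : List (ℕ × ℕ)) (pb : ℕ), ps ≠ [] →
    pb + bS ps + Esum pb ps + 1 ≤ 2*((pb+1)/2) + 2*ocS ps + ps.length
  | [], pb, h => absurd rfl h
  | [x], pb, _ => by simp [bS, Esum, ocS]; omega
  | x :: y :: r, pb, _ => by
      have ih := esum_bound (y :: r) x.2 (by simp)
      simp only [bS, Esum, ocS, List.length_cons] at *
      omega

lemma len_le_ocS : ∀ ps : List (ℕ × ℕ), (∀ x ∈ ps.dropLast, 0 < x.2) →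
    ps.length ≤ ocS ps + 1
  | [], _ => by simp
  | [x], _ => by simp [ocS]
  | x :: y :: r, hb => by
      have hx : 0 < x.2 := hb x (by simp)
      have ih := len_le_ocS (y :: r) (fun z hz => hb z (by simp [List.dropLast] at hz ⊢; tauto))
      simp only [ocS, List.length_cons] at *
      omega

set_option maxHeartbeats 1000000 in
lemma upper (t : ℕ) (ht : 2 ≤ t) (heven : Even t) (L : List Bool)
    (hf : false ∈ L) (h : NoUsableRun t L) :
    L.length ≤ ((t + 2) / 2) * ((t + 4) / 2) - 3 := by
  obtain ⟨s, hs⟩ := heven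
  have hs' : t = 2 * s := by omega
  have hs1 : 1 ≤ s := by omega
  obtain ⟨b0, ps, rfl, hg, hb⟩ := decomp L
  have hps : ps ≠ [] := by
    rintro rfl
    simp [body, ones, List.mem_replicate] at hf
  set p := ps.length with hp
  set C := (b0+1)/2 + ocS ps with hC
  have hp1 : 1 ≤ p := by
    cases ps with | nil => exact absurd rfl hps | cons y r => simp [hp]
  -- key summed inequality
  have hkey : zS ps + p * C ≤ p * (t-1) + Esum b0 ps := by
    have := sumind t b0 ps [] (by simpa using hg) (by simpa using hb) (by simpa using h)
    simpa [prevb] using this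
  -- Esum bound
  have hE : b0 + bS ps + Esum b0 ps + 1 ≤ 2*((b0+1)/2) + 2*ocS ps + p := esum_bound ps b0 hps
  -- C ≤ 2s
  have hC2 : C ≤ 2 * s := by
    obtain ⟨⟨g, b⟩, r, rfl⟩ : ∃ x r, ps = x :: r := by
      cases ps with | nil => exact absurd rfl hps | cons y r => exact ⟨y, r, rfl⟩
    have := run_constraint t b0 [] r g b (by simpa using hg) (by simpa using hb)
      (by simpa using h)
    have hg0 : 0 < g := hg (g,b) (by simp)
    simp only [List.nil_append] at this
    omega
  -- p ≤ C + 1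
  have hpC : p ≤ C + 1 := by
    have := len_le_ocS ps hb
    omega
  have hN : (ones b0 ++ body ps).length = b0 + (zS ps + bS ps) := by
    simp [ones, len_body]
  -- combine: N + p*C + 1 ≤ 2*s*p + 2*C
  have hkey2 : (ones b0 ++ body ps).length + p * C + 1 ≤ 2 * s * p + 2 * C := by
    have e1 : p * (t-1) + p = p * (2*s) := by
      have : t - 1 + 1 = 2 * s := by omega
      calc p * (t-1) + p = p * ((t-1) + 1) := by ring
        _ = p * (2*s) := by rw [this]
    have : zS ps + p * C + (b0 + bS ps + Esum b0 ps + 1)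
        ≤ (p * (t-1) + Esum b0 ps) + (2*((b0+1)/2) + 2*ocS ps + p) := by
      omega
    rw [hN]
    have h2C : 2*((b0+1)/2) + 2*ocS ps = 2 * C := by rw [hC]; ring
    linarith [this, e1, h2C]
  -- final arithmetic
  have htarget : ((t + 2) / 2) * ((t + 4) / 2) = (s+1) * (s+2) := by
    have e2 : (t + 2) / 2 = s + 1 := by omega
    have e3 : (t + 4) / 2 = s + 2 := by omega
    rw [e2, e3]
  rw [htarget]
  set N := (ones b0 ++ body ps).length with hNdef
  have final : N + 3 ≤ (s+1) * (s+2) := by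
    have k' : (N:ℤ) + p * C + 1 ≤ 2*s*p + 2*C := by exact_mod_cast hkey2
    have c2 : (C:ℤ) ≤ 2*s := by exact_mod_cast hC2
    have pc : (p:ℤ) ≤ C + 1 := by exact_mod_cast hpC
    have p1 : (1:ℤ) ≤ p := by exact_mod_cast hp1
    have s1 : (1:ℤ) ≤ s := by exact_mod_cast hs1
    have : (N:ℤ) + 3 ≤ (s+1) * (s+2) := by
      rcases le_or_gt (p:ℤ) 2 with hple | hpgt
      · have e1 : (2-(p:ℤ))*C ≤ (2-p)*(2*s) :=
          mul_le_mul_of_nonneg_left c2 (by linarith)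
        have e2 : (s:ℤ)*1 ≤ s*s := mul_le_mul_of_nonneg_left s1 (by linarith)
        nlinarith [k', e1, e2]
      · have h3 : (3:ℤ) ≤ p := by omega
        have prod1 : ((p:ℤ)-2)*(p-1) ≤ (p-2)*C :=
          mul_le_mul_of_nonneg_left (by linarith) (by linarith)
        have prod2 : (0:ℤ) ≤ ((s:ℤ)-p+1)*((s:ℤ)-p+2) := by
          rcases le_or_gt (p:ℤ) (s+1) with h' | h'
          · nlinarith
          · nlinarith
        nlinarith [k', prod1, prod2]
    exact_mod_cast this
  omega

def strL : List ℕ → List Bool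
  | [] => []
  | [g] => zeros g
  | g :: g' :: r => zeros g ++ true :: strL (g' :: r)

lemma strL_cons (g : ℕ) {xs : List ℕ} (h : xs ≠ []) :
    strL (g :: xs) = zeros g ++ true :: strL xs := by
  cases xs with
  | nil => exact absurd rfl h
  | cons a r => rfl

lemma strL_head : ∀ (g : ℕ) (r : List ℕ), 0 < g → ∃ w, strL (g :: r) = false :: w := by
  intro g r hgpos
  obtain ⟨j, rfl⟩ : ∃ j, g = j + 1 := ⟨g - 1, by omega⟩
  cases r with
  | nil => exact ⟨zeros j, rfl⟩
  | cons a r' => exact ⟨zeros j ++ true :: strL (a :: r'), rfl⟩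

lemma oc_strL : ∀ (gs : List ℕ), (∀ x ∈ gs, 0 < x) → gs ≠ [] →
    onesCount (strL gs) + 1 = gs.length
  | [], _, h => absurd rfl h
  | [g], _, _ => by simp [strL, oc_zeros]
  | g :: g' :: r, hpos, _ => by
      have hg' : 0 < g' := hpos g' (by simp)
      obtain ⟨w, hw⟩ := strL_head g' r hg'
      have ih := oc_strL (g' :: r) (fun x hx => hpos x (by simp [hx])) (by simp)
      have e : strL (g :: g' :: r) = zeros g ++ true :: false :: w := by
        rw [show strL (g :: g' :: r) = zeros g ++ true :: strL (g' :: r) from rfl, hw]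
      rw [e, oc_zeros_append]
      have : onesCount (true :: false :: w) = 1 + onesCount w := rfl
      rw [this]
      have : onesCount w = onesCount (strL (g' :: r)) := by rw [hw]; rfl
      simp only [this] at *
      simp only [List.length_cons] at *
      omega

lemma len_strL : ∀ gs : List ℕ, gs ≠ [] →
    (strL gs).length + 1 = gs.sum + gs.length
  | [], h => absurd rfl h
  | [g], _ => by simp [strL, zeros]
  | g :: g' :: r, _ => by
      have ih := len_strL (g' :: r) (by simp)
      rw [show strL (g :: g' :: r) = zeros g ++ true :: strL (g' :: r) from rfl]
      simp only [List.length_append, List.length_cons, zeros, List.length_replicate,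
        List.sum_cons] at *
      omega

lemma M0 : ∀ (gs : List ℕ) (A l : List Bool), strL gs = A ++ true :: l →
    ∃ gs₁ gs₂, gs₁ ≠ [] ∧ gs₂ ≠ [] ∧ gs = gs₁ ++ gs₂ ∧ A = strL gs₁ ∧ l = strL gs₂
  | [], A, l, h => by simp [strL] at h
  | [g], A, l, h => by
      have : true ∈ zeros g := by rw [show strL [g] = zeros g from rfl] at h; rw [h]; simp
      simp [zeros, List.mem_replicate] at this
  | g :: g' :: r, A, l, h => by
      rw [show strL (g :: g' :: r) = zeros g ++ true :: strL (g' :: r) from rfl] at h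
      rcases List.append_eq_append_iff.1 h with ⟨a, ha1, ha2⟩ | ⟨c, hc1, hc2⟩
      · -- A = zeros g ++ a, true :: strL (g'::r) = a ++ true :: l
        cases a with
        | nil =>
            refine ⟨[g], g' :: r, by simp, by simp, rfl, by simpa [strL] using ha1, ?_⟩
            simpa using ha2.symm
        | cons x a' =>
            have hx : x = true := by simpa using congrArg (List.head? ·) ha2.symm
            subst hx
            have ha2' : strL (g' :: r) = a' ++ true :: l := by simpa using ha2
            obtain ⟨gs₁, gs₂, h1, h2, h3, h4, h5⟩ := M0 (g' :: r) a' l ha2'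
            refine ⟨g :: gs₁, gs₂, by simp, h2, by simp [h3], ?_, h5⟩
            rw [strL_cons g h1, ha1, ← h4]
      · -- zeros g = A ++ c, true :: l = c ++ true :: strL (g'::r)
        cases c with
        | nil =>
            refine ⟨[g], g' :: r, by simp, by simp, rfl, by simpa [strL] using hc1.symm, ?_⟩
            simpa using hc2
        | cons x c' =>
            have hx : x = false := by
              have : x ∈ zeros g := by rw [hc1]; simp
              exact (List.mem_replicate.1 this).2
            have : x = true := by simpa using congrArg (List.head? ·) hc2
            simp [hx] at this

lemma PRE : ∀ (gs : List ℕ) (B : List Bool) (γ : ℕ), strL gs = zeros γ ++ true :: B →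
    ∃ r, r ≠ [] ∧ gs = γ :: r ∧ B = strL r
  | [], B, γ, h => by
      have := congrArg List.length h
      simp [strL, zeros] at this
  | [g], B, γ, h => by
      have : true ∈ zeros g := by rw [show strL [g] = zeros g from rfl] at h; rw [h]; simp
      simp [zeros, List.mem_replicate] at this
  | g :: g' :: r, B, γ, h => by
      rw [show strL (g :: g' :: r) = zeros g ++ true :: strL (g' :: r) from rfl] at h
      rcases List.append_eq_append_iff.1 h with ⟨a, ha1, ha2⟩ | ⟨c, hc1, hc2⟩
      · -- zeros γ = zeros g ++ a, true :: strL (g'::r) = a ++ true :: B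
        cases a with
        | nil =>
            have hγ : g = γ := by
              have := congrArg List.length ha1
              simp [zeros] at this
              omega
            subst hγ
            exact ⟨g' :: r, by simp, rfl, by simpa using ha2.symm⟩
        | cons x a' =>
            have hx : x = false := by
              have : x ∈ zeros γ := by rw [ha1]; simp
              exact (List.mem_replicate.1 this).2
            have : x = true := by simpa using congrArg (List.head? ·) ha2.symm
            simp [hx] at this
      · -- zeros g = zeros γ ++ c, true :: B = c ++ true :: strL (g'::r)
        cases c with
        | nil =>
            have hγ : g = γ := by
              have := congrArg List.length hc1
              simp [zeros] at this
              omega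
            subst hγ
            exact ⟨g' :: r, by simp, rfl, by simpa using hc2⟩
        | cons x c' =>
            have hx : x = false := by
              have : x ∈ zeros g := by rw [hc1]; simp
              exact (List.mem_replicate.1 this).2
            have : x = true := by simpa using congrArg (List.head? ·) hc2
            simp [hx] at this

lemma SUF (gs : List ℕ) (A : List Bool) (γ : ℕ) (h : strL gs = A ++ true :: zeros γ) :
    ∃ q, q ≠ [] ∧ gs = q ++ [γ] ∧ A = strL q := by
  obtain ⟨gs₁, gs₂, h1, h2, h3, h4, h5⟩ := M0 gs A (zeros γ) h
  cases gs₂ with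
  | nil => exact absurd rfl h2
  | cons g r =>
      cases r with
      | nil =>
          have : g = γ := by
            have := congrArg List.length h5
            simp [strL, zeros] at this
            omega
          subst this
          exact ⟨gs₁, h1, h3, h4⟩
      | cons g' r' =>
          exfalso
          have : true ∈ zeros γ := by
            rw [h5, show strL (g :: g' :: r') = zeros g ++ true :: strL (g' :: r') from rfl]
            simp
          simpa using (List.mem_replicate.1 this).2

def gsE (s : ℕ) : List ℕ := s :: (List.replicate (s-1) (s+1) ++ [s])

lemma gsE_pos (s : ℕ) (hs : 1 ≤ s) : ∀ x ∈ gsE s, 0 < x := by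
  intro x hx
  simp [gsE, List.mem_replicate] at hx
  rcases hx with rfl | ⟨-, rfl⟩ | rfl <;> omega

lemma gsE_le (s : ℕ) : ∀ x ∈ gsE s, x ≤ s + 1 := by
  intro x hx
  simp [gsE, List.mem_replicate] at hx
  rcases hx with rfl | ⟨-, rfl⟩ | rfl <;> omega

lemma gsE_length (s : ℕ) (hs : 1 ≤ s) : (gsE s).length = s + 1 := by
  simp [gsE]
  omega

lemma extremal (t s : ℕ) (hs1 : 1 ≤ s) (hts : t = 2 * s) :
    ∃ L : List Bool, false ∈ L ∧ L.length = (s+1) * (s+2) - 3 ∧ NoUsableRun t L := by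
  refine ⟨strL (gsE s), ?_, ?_, ?_, ?_, ?_, ?_⟩
  · -- false ∈ L
    rw [show gsE s = s :: (List.replicate (s-1) (s+1) ++ [s]) from rfl,
      strL_cons s (by simp)]
    obtain ⟨k, rfl⟩ : ∃ k, s = k + 1 := ⟨s - 1, by omega⟩
    simp [zeros, List.replicate_succ]
  · -- length
    obtain ⟨k, rfl⟩ : ∃ k, s = k + 1 := ⟨s - 1, by omega⟩
    have hsum := len_strL (gsE (k+1)) (by simp [gsE])
    simp [gsE, List.sum_replicate, smul_eq_mul] at hsum
    have e : (k+1+1)*(k+1+2) = k*(k+1+1) + 3*k + 6 := by ring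
    have h2 : (strL (gsE (k+1))).length + 1 = k + 1 + (k * (k + 1 + 1) + (k + 1)) + (k + 1 + 1) := by
      simpa [gsE, List.sum_replicate, smul_eq_mul] using hsum
    have : (strL (gsE (k+1))).length + 3 = (k+1+1) * (k+1+2) := by linarith [h2, e]
    exact Nat.eq_sub_of_add_eq this
  · -- clause 1
    intro A B γ hγ heq
    have h' : strL (gsE s) = A ++ true :: (List.replicate γ false ++ true :: B) := by
      rw [heq]; simp
    obtain ⟨gs₁, gs₂, h1, h2, h3, h4, h5⟩ := M0 (gsE s) A _ h'
    obtain ⟨r, hr, hgs₂, hB⟩ := PRE gs₂ B γ h5.symm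
    have hγle : γ ≤ s + 1 := gsE_le s γ (by rw [h3, hgs₂]; simp)
    have hpos1 : ∀ x ∈ gs₁, 0 < x := fun x hx => gsE_pos s hs1 x (by rw [h3]; simp [hx])
    have hposr : ∀ x ∈ r, 0 < x := fun x hx =>
      gsE_pos s hs1 x (by rw [h3, hgs₂]; simp [hx])
    have hocA := oc_strL gs₁ hpos1 h1
    have hocB := oc_strL r hposr hr
    have hlen : gs₁.length + (r.length + 1) = s + 1 := by
      have := congrArg List.length h3
      rw [gsE_length s hs1] at this
      simp [hgs₂] at this
      omega
    rw [h4, hB]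
    have hg1 : 1 ≤ gs₁.length := by
      cases gs₁ with | nil => exact absurd rfl h1 | cons a b => simp
    have hr1 : 1 ≤ r.length := by
      cases r with | nil => exact absurd rfl hr | cons a b => simp
    omega
  · -- clause 2
    intro B γ hγ heq
    have h' : strL (gsE s) = List.replicate γ false ++ true :: B := by rw [heq]; simp
    obtain ⟨r, hr, hgs, hB⟩ := PRE (gsE s) B γ h'
    have hγs : γ = s := by
      have := congrArg (List.head? ·) hgs
      simpa [gsE] using this.symm
    have hrtail : r = List.replicate (s-1) (s+1) ++ [s] := by
      have := congrArg List.tail hgs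
      simpa [gsE] using this.symm
    have hposr : ∀ x ∈ r, 0 < x := fun x hx => gsE_pos s hs1 x (by rw [hgs]; simp [hx])
    have hocB := oc_strL r hposr hr
    have hrlen : r.length = s := by
      rw [hrtail]
      simp
      omega
    rw [hB]
    omega
  · -- clause 3
    intro A γ hγ heq
    have h' : strL (gsE s) = A ++ true :: List.replicate γ false := by rw [heq]; simp
    obtain ⟨q, hq, hgs, hA⟩ := SUF (gsE s) A γ h'
    have hγs : γ = s := by
      have e1 : (gsE s).getLast? = some s := by
        rw [show gsE s = (s :: List.replicate (s-1) (s+1)) ++ [s] from by simp [gsE]]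
        exact List.getLast?_concat
      rw [hgs, List.getLast?_concat] at e1
      exact Option.some_injective _ e1
    have hposq : ∀ x ∈ q, 0 < x := fun x hx => gsE_pos s hs1 x (by rw [hgs]; simp [hx])
    have hocA := oc_strL q hposq hq
    have hqlen : q.length = s := by
      have := congrArg List.length hgs
      rw [gsE_length s hs1] at this
      simp at this
      omega
    rw [hA]
    omega
  · -- clause 4
    intro γ hγ heq
    have htrue : true ∈ strL (gsE s) := by
      rw [show gsE s = s :: (List.replicate (s-1) (s+1) ++ [s]) from rfl,
        strL_cons s (by simp)]
      simp
    rw [heq] at htrue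
    simpa using (List.mem_replicate.1 htrue).2

end NUR

/-- Even-`t` case of Theorem 2: the maximum length of a difference vector (containing at
least one zero) with no usable zero-run is `((t+2)/2)·((t+4)/2) − 3`. -/
theorem max_no_usable_even (t : ℕ) (ht : 2 ≤ t) (heven : Even t) :
    IsGreatest {n | ∃ L : List Bool, false ∈ L ∧ L.length = n ∧ NoUsableRun t L}
      (((t + 2) / 2) * ((t + 4) / 2) - 3) := by
  obtain ⟨s, hs⟩ := heven
  have hts : t = 2 * s := by omega
  have hs1 : 1 ≤ s := by omega
  have htarget : ((t + 2) / 2) * ((t + 4) / 2) = (s+1) * (s+2) := by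
    have e2 : (t + 2) / 2 = s + 1 := by omega
    have e3 : (t + 4) / 2 = s + 2 := by omega
    rw [e2, e3]
  constructor
  · obtain ⟨L, hf, hlen, hnur⟩ := NUR.extremal t s hs1 hts
    exact ⟨L, hf, by rw [hlen, htarget], hnur⟩
  · rintro n ⟨L, hf, rfl, hn⟩
    exact NUR.upper t ht ⟨s, by omega⟩ L hf hn
end

section
/- Let t ≥ 1 be an odd integer and define g(p,q) = (t − p/2 − q/2 + 3/2)·(p − 2) + 2·(t − p/2 − q/2 + 1/2) + q. Then the maximum of g(p,q) over integers p ≥ 2 and q ≥ p − 1 with q − p + 1 even, subject to all run-length bounds t − p/2 − q/2 + 3/2 ≥ 0 and t − p/2 − q/2 + 1/2 ≥ 0 being nonnegative, equals ((t+3)/2)² − 3, attained at p = (t+3)/2 and q = p − 1. -/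
/-- Optimization from the proof of Theorem 2 (Case 3.a, odd `t`): the maximum of
`g(p,q) = (t − p/2 − q/2 + 3/2)(p−2) + 2(t − p/2 − q/2 + 1/2) + q` over integers
`p ≥ 2`, `q ≥ p−1` with `q − p + 1` even and both run-length bounds nonnegative is
`((t+3)/2)² − 3`, attained at `p = (t+3)/2`, `q = p−1`. -/
theorem max_g_case3a (t : ℕ) (ht : 1 ≤ t) (hodd : Odd t) :
    IsGreatest {x : ℚ | ∃ p q : ℕ, 2 ≤ p ∧ p ≤ q + 1 ∧ Even (q + 1 - p) ∧
        0 ≤ (t : ℚ) - p / 2 - q / 2 + 3 / 2 ∧ 0 ≤ (t : ℚ) - p / 2 - q / 2 + 1 / 2 ∧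
        x = ((t : ℚ) - p / 2 - q / 2 + 3 / 2) * ((p : ℚ) - 2)
            + 2 * ((t : ℚ) - p / 2 - q / 2 + 1 / 2) + q}
      ((((t : ℚ) + 3) / 2) ^ 2 - 3) ∧
    ∃ p q : ℕ, p = (t + 3) / 2 ∧ q = p - 1 ∧
      ((t : ℚ) - p / 2 - q / 2 + 3 / 2) * ((p : ℚ) - 2)
          + 2 * ((t : ℚ) - p / 2 - q / 2 + 1 / 2) + q
        = (((t : ℚ) + 3) / 2) ^ 2 - 3 := by
  obtain ⟨k, hk⟩ := hodd
  subst hk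
  constructor
  · constructor
    · refine ⟨k + 2, k + 1, by omega, by omega, by simp, ?_, ?_, ?_⟩
      · push_cast; nlinarith [Nat.cast_nonneg (α := ℚ) k]
      · push_cast; nlinarith [Nat.cast_nonneg (α := ℚ) k]
      · push_cast; ring
    · rintro x ⟨p, q, h2, hpq, _, hb1, hb2, rfl⟩
      have hp2 : (2 : ℚ) ≤ p := by exact_mod_cast h2
      have hpq' : (p : ℚ) ≤ q + 1 := by exact_mod_cast hpq
      push_cast at hb1 hb2 ⊢
      nlinarith [mul_nonneg (by linarith : (0:ℚ) ≤ (q:ℚ) + 1 - p) hb2,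
        sq_nonneg ((2*(k:ℚ)+3 - p - q)), sq_nonneg ((q:ℚ)+1-p)]
  · refine ⟨k + 2, k + 1, by omega, by omega, ?_⟩
    push_cast; ring
end

section
/- Let δ be a binary string that is a sum over 𝔽₂ of fault vectors (each a basis vector or an adjacent-pair vector e_i + e_{i+1}). Then the number of non-overlapping 11 substrings of δ (counted greedily from the left) plus the number of remaining ones of δ is a lower bound on the number of fault vectors in any such decomposition of δ. -/
/-- Flip the bit at position `i` (no-op if out of range). -/
def flip1 : List Bool → ℕ → List Bool
  | [], _ => []
  | b :: l, 0 => (!b) :: l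
  | b :: l, n + 1 => b :: flip1 l n

/-- Flip the bits at positions `i` and `i+1` (partial no-op if out of range). -/
def flip2 : List Bool → ℕ → List Bool
  | [], _ => []
  | [b], 0 => [!b]
  | b :: c :: l, 0 => (!b) :: (!c) :: l
  | b :: l, n + 1 => b :: flip2 l n

lemma cons_bounds : ∀ (l : List Bool) (c : Bool),
    onesCount l ≤ onesCount (c :: l) ∧ onesCount (c :: l) ≤ onesCount l + 1
  | [], false => by simp [onesCount]
  | [], true => by simp [onesCount]
  | d :: l', false => by simp [onesCount]
  | d :: l', true => by
      have := cons_bounds l' d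
      simp only [onesCount]
      omega

lemma flip1_le : ∀ (l : List Bool) (i : ℕ), onesCount (flip1 l i) ≤ onesCount l + 1
  | [], _ => by simp [flip1]
  | b :: l, 0 => by
      have h1 := (cons_bounds l (!b)).2
      have h2 := (cons_bounds l b).1
      simp only [flip1]; omega
  | false :: l, n + 1 => by
      have := flip1_le l n
      simp only [flip1, onesCount]; exact this
  | [true], n + 1 => by simp [flip1, onesCount]
  | true :: c :: l, 1 => by simp [flip1, onesCount]
  | true :: c :: l, n + 2 => by
      have := flip1_le l n
      simp only [flip1, onesCount]; omega

lemma flip2_le : ∀ (l : List Bool) (i : ℕ), onesCount (flip2 l i) ≤ onesCount l + 1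
  | [], _ => by simp [flip2]
  | [b], 0 => by cases b <;> simp [flip2, onesCount]
  | b :: c :: l, 0 => by
      have h1 := cons_bounds l (!c)
      have h2 := cons_bounds l c
      cases b <;> cases c <;> simp only [flip2, onesCount, Bool.not_true, Bool.not_false] at * <;> omega
  | false :: l, n + 1 => by
      have := flip2_le l n
      simp only [flip2, onesCount]; exact this
  | [true], n + 1 => by simp [flip2, onesCount]
  | true :: [c], 1 => by cases c <;> simp [flip2, onesCount]
  | true :: c :: d :: l, 1 => by
      have h1 := cons_bounds l (!d)
      have h2 := cons_bounds l d
      simp only [flip2, onesCount]; omega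
  | true :: c :: l, n + 2 => by
      have := flip2_le l n
      simp only [flip2, onesCount]; omega

lemma flip1_flip1 : ∀ (l : List Bool) (i : ℕ), flip1 (flip1 l i) i = l
  | [], _ => rfl
  | b :: l, 0 => by simp [flip1]
  | b :: l, n + 1 => by simp [flip1, flip1_flip1 l n]

lemma flip2_flip2 : ∀ (l : List Bool) (i : ℕ), flip2 (flip2 l i) i = l
  | [], _ => rfl
  | [b], 0 => by simp [flip2]
  | b :: c :: l, 0 => by simp [flip2]
  | [b], n + 1 => by simp [flip2]
  | b :: c :: l, n + 1 => by simp [flip2, flip2_flip2 (c :: l) n]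

lemma flip1_getD_ne : ∀ (l : List Bool) (i p : ℕ), p ≠ i →
    (flip1 l i).getD p false = l.getD p false
  | [], _, _, _ => by simp [flip1]
  | b :: l, 0, p, h => by
      cases p with
      | zero => exact absurd rfl h
      | succ q => simp [flip1]
  | b :: l, n + 1, 0, h => by simp [flip1]
  | b :: l, n + 1, p + 1, h => by
      simp only [flip1, List.getD_cons_succ]
      exact flip1_getD_ne l n p (fun hh => h (by omega))

lemma flip1_getD_eq : ∀ (l : List Bool) (i : ℕ), i < l.length →
    (flip1 l i).getD i false = !(l.getD i false)
  | [], _, h => by simp at h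
  | b :: l, 0, _ => by simp [flip1]
  | b :: l, n + 1, h => by
      simp only [flip1, List.getD_cons_succ]
      exact flip1_getD_eq l n (by simpa using h)

lemma flip2_getD_ne : ∀ (l : List Bool) (i p : ℕ), p ≠ i → p ≠ i + 1 →
    (flip2 l i).getD p false = l.getD p false
  | [], _, _, _, _ => by simp [flip2]
  | [b], 0, p, h1, h2 => by
      cases p with
      | zero => exact absurd rfl h1
      | succ q => simp [flip2]
  | b :: c :: l, 0, p, h1, h2 => by
      match p, h1, h2 with
      | q + 2, _, _ => simp [flip2]
  | [b], n + 1, p, h1, h2 => by simp [flip2]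
  | b :: c :: l, n + 1, 0, h1, h2 => by simp [flip2]
  | b :: c :: l, n + 1, p + 1, h1, h2 => by
      simp only [flip2, List.getD_cons_succ]
      exact flip2_getD_ne (c :: l) n p (fun hh => h1 (by omega)) (fun hh => h2 (by omega))

lemma flip2_getD_eq1 : ∀ (l : List Bool) (i : ℕ), i < l.length →
    (flip2 l i).getD i false = !(l.getD i false)
  | [], _, h => by simp at h
  | [b], 0, _ => by simp [flip2]
  | b :: c :: l, 0, _ => by simp [flip2]
  | [b], n + 1, h => by simp at h
  | b :: c :: l, n + 1, h => by
      simp only [flip2, List.getD_cons_succ]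
      exact flip2_getD_eq1 (c :: l) n (by simpa using h)

lemma flip2_getD_eq2 : ∀ (l : List Bool) (i : ℕ), i + 1 < l.length →
    (flip2 l i).getD (i + 1) false = !(l.getD (i + 1) false)
  | [], _, h => by simp at h
  | [b], 0, h => by simp at h
  | b :: c :: l, 0, _ => by simp [flip2]
  | [b], n + 1, h => by simp at h
  | b :: c :: l, n + 1, h => by
      simp only [flip2, List.getD_cons_succ]
      exact flip2_getD_eq2 (c :: l) n (by simpa using h)

lemma flip1_length : ∀ (l : List Bool) (i : ℕ), (flip1 l i).length = l.length
  | [], _ => rfl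
  | b :: l, 0 => rfl
  | b :: l, n + 1 => by simp [flip1, flip1_length l n]

lemma flip2_length : ∀ (l : List Bool) (i : ℕ), (flip2 l i).length = l.length
  | [], _ => rfl
  | [b], 0 => rfl
  | b :: c :: l, 0 => rfl
  | [b], n + 1 => rfl
  | b :: c :: l, n + 1 => by simp [flip2, flip2_length (c :: l) n]

lemma onesCount_all_false : ∀ (l : List Bool), (∀ p, l.getD p false = false) → onesCount l = 0
  | [], _ => rfl
  | b :: l, h => by
      have h0 := h 0
      simp only [List.getD_cons_zero] at h0
      subst h0
      simp only [onesCount]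
      exact onesCount_all_false l (fun p => by simpa using h (p + 1))

lemma bool_flip (b : Bool) : (if (!b) = true then (1 : ZMod 2) else 0)
    = (if b = true then (1 : ZMod 2) else 0) + 1 := by
  cases b <;> decide

lemma two_eq_zero : (1 : ZMod 2) + 1 = 0 := by decide

lemma aux : ∀ (F : List (Finset ℕ)) (L : List Bool),
    (∀ s ∈ F, IsFaultSupp L.length s) →
    (∀ p, (if L.getD p false = true then (1 : ZMod 2) else 0)
        = (F.countP (fun s => decide (p ∈ s)) : ℕ)) →
    onesCount L ≤ F.length := by
  intro F
  induction F with
  | nil =>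
      intro L _ hsum
      have hall : ∀ p, L.getD p false = false := by
        intro p
        have := hsum p
        simp only [List.countP_nil, Nat.cast_zero] at this
        by_contra hb
        rw [eq_true_of_ne_false hb] at this
        simp at this
      simp [onesCount_all_false L hall]
  | cons s F' ih =>
      intro L hsupp hsum
      have hsupp' : ∀ t ∈ F', IsFaultSupp L.length t :=
        fun t ht => hsupp t (List.mem_cons_of_mem s ht)
      rcases hsupp s List.mem_cons_self with h0 | ⟨i, hi, hs⟩ | ⟨i, hi, hs⟩
      · -- empty support
        subst h0
        have : onesCount L ≤ F'.length := by
          apply ih L hsupp'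
          intro p
          have := hsum p
          simpa [List.countP_cons] using this
        simpa using Nat.le_succ_of_le this
      · -- singleton {i}
        subst hs
        set L' := flip1 L i with hL'
        have hlen : L'.length = L.length := flip1_length L i
        have hstep : onesCount L' ≤ F'.length := by
          apply ih L' (by rw [hlen]; exact hsupp')
          intro p
          have h := hsum p
          rw [List.countP_cons] at h
          by_cases hpi : p = i
          · subst hpi
            have hone : (if decide (p ∈ ({p} : Finset ℕ)) = true then 1 else 0) = 1 := by simp
            rw [hone] at h
            push_cast at h
            rw [hL', flip1_getD_eq L p hi, bool_flip, h, add_assoc, two_eq_zero, add_zero]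
          · have hzero : (if decide (p ∈ ({i} : Finset ℕ)) = true then 1 else 0) = 0 := by
              simp [hpi]
            rw [hzero] at h
            rw [hL', flip1_getD_ne L i p hpi]
            simpa using h
        have hback : onesCount L ≤ onesCount L' + 1 := by
          conv_lhs => rw [← flip1_flip1 L i]
          exact flip1_le L' i
        simp only [List.length_cons]
        omega
      · -- pair {i, i+1}
        subst hs
        set L' := flip2 L i with hL'
        have hlen : L'.length = L.length := flip2_length L i
        have hi1 : i < L.length := by omega
        have hstep : onesCount L' ≤ F'.length := by
          apply ih L' (by rw [hlen]; exact hsupp')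
          intro p
          have h := hsum p
          rw [List.countP_cons] at h
          by_cases hpi : p = i
          · subst hpi
            have hone : (if decide (p ∈ ({p, p + 1} : Finset ℕ)) = true then 1 else 0) = 1 := by
              simp
            rw [hone] at h
            push_cast at h
            rw [hL', flip2_getD_eq1 L p hi1, bool_flip, h, add_assoc, two_eq_zero, add_zero]
          · by_cases hpi1 : p = i + 1
            · subst hpi1
              have hone : (if decide (i + 1 ∈ ({i, i + 1} : Finset ℕ)) = true then 1 else 0)
                  = 1 := by simp
              rw [hone] at h
              push_cast at h
              rw [hL', flip2_getD_eq2 L i hi, bool_flip, h, add_assoc, two_eq_zero, add_zero]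
            · have hzero : (if decide (p ∈ ({i, i + 1} : Finset ℕ)) = true then 1 else 0)
                  = 0 := by simp [hpi, hpi1]
              rw [hzero] at h
              rw [hL', flip2_getD_ne L i p hpi hpi1]
              simpa using h
        have hback : onesCount L ≤ onesCount L' + 1 := by
          conv_lhs => rw [← flip2_flip2 L i]
          exact flip2_le L' i
        simp only [List.length_cons]
        omega

/-- The number of non-overlapping `11` substrings plus remaining ones of `δ` is a lower
bound on the number of fault vectors in any decomposition of `δ`. -/
theorem onesCount_le_faults (m : ℕ) (L : List Bool) (hm : L.length = m)
    (F : List (Finset ℕ)) (hFsupp : ∀ s ∈ F, IsFaultSupp m s)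
    (hFsum : ∀ p, (if L.getD p false = true then (1 : ZMod 2) else 0)
        = (F.countP (fun s => decide (p ∈ s)) : ℕ)) :
    onesCount L ≤ F.length := by
  subst hm
  exact aux F L hFsupp hFsum
end

section
/- Let p_{T,1} = C(r₁L, t+1)^{-1/t} and p_{T,2} = C(r₂L, t+1)^{-1/t} with integers r₁ ≥ r₂ ≥ 1, L ≥ 1, and t ≥ 1 with r₂L > t. Then p_{T,2} ≥ p_{T,1} · (r₁/r₂)^{1 + 1/t}, as an inequality of positive real numbers. -/
lemma choose_ratio (n m k : ℕ) (hmn : m ≤ n) :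
    n ^ k * m.choose k ≤ m ^ k * n.choose k := by
  have h : n ^ k * m.descFactorial k ≤ m ^ k * n.descFactorial k := by
    rw [Nat.descFactorial_eq_prod_range, Nat.descFactorial_eq_prod_range]
    have h2 : ∏ i ∈ Finset.range k, (n * (m - i)) ≤ ∏ i ∈ Finset.range k, (m * (n - i)) := by
      apply Finset.prod_le_prod'
      intro i hi
      rw [Nat.mul_sub, Nat.mul_sub, Nat.mul_comm n m]
      exact Nat.sub_le_sub_left (Nat.mul_le_mul_right i hmn) _
    simpa [Finset.prod_mul_distrib, Finset.prod_const, Finset.card_range] using h2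
  rw [Nat.descFactorial_eq_factorial_mul_choose, Nat.descFactorial_eq_factorial_mul_choose] at h
  have hf : 0 < k.factorial := Nat.factorial_pos k
  have h3 : (n ^ k * m.choose k) * k.factorial ≤ (m ^ k * n.choose k) * k.factorial := by
    ring_nf; ring_nf at h; linarith
  exact Nat.le_of_mul_le_mul_right h3 hf

/-- Threshold comparison: with `p_{T,i} = C(rᵢL, t+1)^{-1/t}` and `r₁ ≥ r₂`, one has
`p_{T,2} ≥ p_{T,1} · (r₁/r₂)^{1 + 1/t}`. -/
theorem threshold_improvement (r₁ r₂ L t : ℕ) (hr : r₂ ≤ r₁) (hr₂ : 1 ≤ r₂)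
    (hL : 1 ≤ L) (ht : 1 ≤ t) (htL : t < r₂ * L) :
    (((r₁ * L).choose (t + 1) : ℝ)) ^ (-(1 / (t : ℝ)))
        * ((r₁ : ℝ) / (r₂ : ℝ)) ^ ((1 : ℝ) + 1 / (t : ℝ))
      ≤ (((r₂ * L).choose (t + 1) : ℝ)) ^ (-(1 / (t : ℝ))) := by
  set n := r₁ * L with hn
  set m := r₂ * L with hm
  have hmn : m ≤ n := Nat.mul_le_mul_right L hr
  have hkm : t + 1 ≤ m := htL
  have hkn : t + 1 ≤ n := hkm.trans hmn
  set A : ℝ := ((n.choose (t + 1) : ℕ) : ℝ) with hA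
  set B : ℝ := ((m.choose (t + 1) : ℕ) : ℝ) with hB
  have hA0 : 0 < A := by rw [hA]; exact_mod_cast Nat.choose_pos hkn
  have hB0 : 0 < B := by rw [hB]; exact_mod_cast Nat.choose_pos hkm
  have ht0 : (0 : ℝ) < t := by exact_mod_cast ht
  have hr₂0 : (0 : ℝ) < r₂ := by exact_mod_cast hr₂
  have hr₁0 : (0 : ℝ) < r₁ := lt_of_lt_of_le hr₂0 (by exact_mod_cast hr)
  have hL0 : (0 : ℝ) < L := by exact_mod_cast hL
  set x : ℝ := (r₁ : ℝ) / (r₂ : ℝ) with hx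
  have hx0 : 0 < x := div_pos hr₁0 hr₂0
  have key : (n : ℝ) ^ (t + 1) * B ≤ (m : ℝ) ^ (t + 1) * A := by
    rw [hA, hB]
    exact_mod_cast choose_ratio n m (t + 1) hmn
  have hm0 : (0 : ℝ) < (m : ℝ) ^ (t + 1) := by positivity
  have hxnm : x ^ (t + 1) = (n : ℝ) ^ (t + 1) / (m : ℝ) ^ (t + 1) := by
    rw [← div_pow]
    congr 1
    rw [hx, hn, hm]
    push_cast
    field_simp
  have hAB : x ^ (t + 1) * B ≤ A := by
    rw [hxnm, div_mul_eq_mul_div, div_le_iff₀ hm0]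
    nlinarith [key]
  have h1 : x ^ ((t : ℝ) + 1) * B ≤ A := by
    rw [show ((t : ℝ) + 1) = ((t + 1 : ℕ) : ℝ) by push_cast; ring, Real.rpow_natCast]
    exact hAB
  have hinv : (0 : ℝ) ≤ 1 / t := by positivity
  have h2 : (x ^ ((t : ℝ) + 1) * B) ^ ((1 : ℝ) / t) ≤ A ^ ((1 : ℝ) / t) :=
    Real.rpow_le_rpow (by positivity) h1 hinv
  rw [Real.mul_rpow (by positivity) hB0.le, ← Real.rpow_mul hx0.le] at h2
  have hexp : ((t : ℝ) + 1) * (1 / t) = 1 + 1 / t := by field_simp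
  rw [hexp] at h2
  set u : ℝ := A ^ ((1 : ℝ) / t) with hu
  set v : ℝ := B ^ ((1 : ℝ) / t) with hv
  have hu0 : 0 < u := Real.rpow_pos_of_pos hA0 _
  have hv0 : 0 < v := Real.rpow_pos_of_pos hB0 _
  have h3 : x ^ ((1 : ℝ) + 1 / t) ≤ u / v := (le_div_iff₀ hv0).mpr h2
  have hgoal : u⁻¹ * x ^ ((1 : ℝ) + 1 / t) ≤ v⁻¹ := by
    calc u⁻¹ * x ^ ((1 : ℝ) + 1 / t) ≤ u⁻¹ * (u / v) :=
          mul_le_mul_of_nonneg_left h3 (inv_nonneg.2 hu0.le)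
      _ = v⁻¹ := by field_simp
  rw [Real.rpow_neg hA0.le, Real.rpow_neg hB0.le]
  exact hgoal
end

section
/- Fix t ≥ 1. Define, for a binary string δ = η₁ 1 η₂ 1 ⋯ 1 η_c (zero-runs separated by ones), the quantities α_c = number of non-overlapping 11 substrings plus remaining ones strictly before the final block 1η_c (with α_c = 0 if c = 1), and γ_c = length of the final zero-run η_c (possibly 0). Then the maximum length of a binary string δ such that for every prefix of δ ending at a run boundary (i.e., every string of the form η₁ 1 ⋯ 1 η_j for j = 1, …, c), the corresponding quantities satisfy α + γ ≤ t − 1, equals t(t+3)/2 − 1. -/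
/-- Every prefix of `L` ending at a run boundary (the next character, if any, is a one)
satisfies `α + γ ≤ t - 1`, where `γ` is the length of the trailing zero-run of the
prefix and `α` counts non-overlapping `11` substrings plus remaining ones strictly
before the final block `1 0^γ` (with `α = 0` for an all-zero prefix). -/
def FlagNoStop (t : ℕ) (L : List Bool) : Prop :=
  ∀ P Q : List Bool, L = P ++ Q → (Q = [] ∨ Q.head? = some true) →
    (∀ A γ, P = A ++ [true] ++ List.replicate γ false → onesCount A + γ ≤ t - 1) ∧
    (∀ γ, P = List.replicate γ false → γ ≤ t - 1)

/- ### `onesCount` lemmas -/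

lemma onesCount_append_false (X Y : List Bool) :
    onesCount (X ++ false :: Y) = onesCount X + onesCount Y := by
  induction X using onesCount.induct with
  | case1 => simp [onesCount]
  | case2 l ih => simp [onesCount, ih]
  | case3 => simp [onesCount]
  | case4 b l ih => simp [onesCount, ih]; omega

lemma onesCount_replicate_append (n : ℕ) (Y : List Bool) :
    onesCount (List.replicate n false ++ Y) = onesCount Y := by
  induction n with
  | zero => rfl
  | succ n ih => simpa [List.replicate_succ, onesCount] using ih

lemma onesCount_replicate (n : ℕ) : onesCount (List.replicate n false) = 0 := by
  simpa [onesCount] using onesCount_replicate_append n []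

lemma onesCount_append_replicate (X : List Bool) (n : ℕ) :
    onesCount (X ++ List.replicate n false) = onesCount X := by
  cases n with
  | zero => simp
  | succ n => simp [List.replicate_succ, onesCount_append_false, onesCount_replicate]

lemma onesCount_append_true_true (X : List Bool) :
    onesCount (X ++ [true, true]) = onesCount X + 1 := by
  induction X using onesCount.induct with
  | case1 => simp [onesCount]
  | case2 l ih => simp [onesCount, ih]
  | case3 => simp [onesCount]
  | case4 b l ih => simp [onesCount, ih]; omega

lemma onesCount_append_true (X : List Bool) :
    onesCount (X ++ [true]) ≤ onesCount X + 1 ∧ onesCount X ≤ onesCount (X ++ [true]) := by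
  induction X using onesCount.induct with
  | case1 => simp [onesCount]
  | case2 l ih => simpa [onesCount] using ih
  | case3 => simp [onesCount]
  | case4 b l ih => simp [onesCount]; omega

/- ### decomposition of an arbitrary list by its last `true` -/

lemma flag_dec (L : List Bool) :
    (∃ γ, L = List.replicate γ false) ∨
    (∃ A γ, L = A ++ true :: List.replicate γ false) := by
  induction L using List.reverseRecOn with
  | nil => exact Or.inl ⟨0, rfl⟩
  | append_singleton M x ih =>
    cases x with
    | true => exact Or.inr ⟨M, 0, by simp⟩
    | false =>
      rcases ih with ⟨γ, rfl⟩ | ⟨A, γ, rfl⟩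
      · exact Or.inl ⟨γ + 1, by simp [List.replicate_succ']⟩
      · exact Or.inr ⟨A, γ + 1, by simp [List.replicate_succ']⟩

/- ### uniqueness of the last-true decomposition -/

lemma rep_true_eq_aux :
    ∀ (a b : ℕ) (X Y : List Bool),
      List.replicate a false ++ true :: X = List.replicate b false ++ true :: Y →
      a = b ∧ X = Y := by
  intro a
  induction a with
  | zero =>
    intro b X Y h
    cases b with
    | zero => simpa using h
    | succ b => simp [List.replicate_succ] at h
  | succ a ih =>
    intro b X Y h
    cases b with
    | zero => simp [List.replicate_succ] at h
    | succ b =>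
      simp only [List.replicate_succ, List.cons_append, List.cons.injEq] at h
      obtain ⟨h1, h2⟩ := ih b X Y h.2
      exact ⟨by omega, h2⟩

lemma rep_true_eq {a b : ℕ} {X Y : List Bool}
    (h : X ++ true :: List.replicate a false = Y ++ true :: List.replicate b false) :
    X = Y ∧ a = b := by
  have h' := congrArg List.reverse h
  simp only [List.reverse_append, List.reverse_cons, List.reverse_replicate,
    List.append_assoc] at h'
  have h'' : List.replicate a false ++ true :: X.reverse
      = List.replicate b false ++ true :: Y.reverse := by
    simpa using h'
  obtain ⟨h1, h2⟩ := rep_true_eq_aux a b _ _ h''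
  exact ⟨List.reverse_injective h2, h1⟩

/- ### `FlagNoStop`: base, restriction, extension -/

lemma flag_replicate {t n : ℕ} (hn : n ≤ t - 1) :
    FlagNoStop t (List.replicate n false) := by
  intro P Q h hQ
  have hP : P = List.replicate P.length false := by
    refine List.eq_replicate_of_mem ?_
    intro b hb
    have : b ∈ List.replicate n false := by
      rw [h]; exact List.mem_append_left _ hb
    exact List.eq_of_mem_replicate this
  constructor
  · intro A γ hA
    have : true ∈ P := by rw [hA]; simp
    have := List.eq_of_mem_replicate (hP ▸ this)
    simp at this
  · intro γ hγ
    have hlen : P.length + Q.length = n := by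
      have := congrArg List.length h
      simpa using this.symm
    have : γ = P.length := by
      have := congrArg List.length hγ
      simpa using this.symm
    omega

lemma flag_restrict {t : ℕ} {A : List Bool} {γ : ℕ}
    (h : FlagNoStop t (A ++ true :: List.replicate γ false)) : FlagNoStop t A := by
  intro P Q hPQ hQ
  refine h P (Q ++ true :: List.replicate γ false) (by rw [hPQ, List.append_assoc]) ?_
  cases Q with
  | nil => exact Or.inr rfl
  | cons q qs =>
    rcases hQ with h' | h'
    · simp at h'
    · exact Or.inr (by simpa using h')

lemma flag_extend {t : ℕ} {L : List Bool} {g : ℕ}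
    (hL : FlagNoStop t L) (hg : onesCount L + g ≤ t - 1) :
    FlagNoStop t (L ++ true :: List.replicate g false) := by
  intro P Q hPQ hQ
  rcases List.append_eq_append_iff.mp hPQ.symm with ⟨c', hc1, hc2⟩ | ⟨a', ha1, ha2⟩
  · refine hL P c' hc1 ?_
    cases c' with
    | nil => exact Or.inl rfl
    | cons x xs =>
      rcases hQ with h' | h'
      · rw [hc2] at h'; simp at h'
      · rw [hc2] at h'
        exact Or.inr (by simpa using h')
  · cases a' with
    | nil =>
      simp only [List.append_nil] at ha1
      subst ha1
      exact hL P [] (by simp) (Or.inl rfl)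
    | cons x xs =>
      simp only [List.cons_append, List.cons.injEq] at ha2
      obtain ⟨hx, hxs⟩ := ha2
      subst hx
      have hQnil : Q = [] := by
        rcases hQ with h' | h'
        · exact h'
        · exfalso
          cases Q with
          | nil => simp at h'
          | cons q qs =>
            have hq : q = true := by simpa using h'
            have : q ∈ List.replicate g false := by
              rw [hxs]; exact List.mem_append_right _ (by simp)
            have := List.eq_of_mem_replicate this
            rw [hq] at this; simp at this
      subst hQnil
      simp only [List.append_nil] at hxs
      subst hxs
      subst ha1
      constructor
      · intro A γ hA
        simp only [List.append_assoc, List.singleton_append] at hA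
        obtain ⟨rfl, rfl⟩ := rep_true_eq hA
        exact hg
      · intro γ hγ
        exfalso
        have : true ∈ List.replicate γ false := by
          rw [← hγ]; simp
        have := List.eq_of_mem_replicate this
        simp at this

/- ### the partial-sum function -/

def flagS (t b : ℕ) : ℕ := ∑ i ∈ Finset.range b, (t - i)

lemma flagS_succ (t b : ℕ) : flagS t (b + 1) = flagS t b + (t - b) :=
  Finset.sum_range_succ _ _

lemma flagS_one (t : ℕ) : flagS t 1 = t := by
  simp [flagS]

lemma flagS_le (t b : ℕ) : flagS t b ≤ flagS t t := by
  rcases le_total b t with h | h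
  · exact Finset.sum_le_sum_of_subset (Finset.range_subset_range.2 h)
  · apply le_of_eq
    refine (Finset.sum_subset (Finset.range_subset_range.2 h) ?_).symm
    intro i hi hni
    simp only [Finset.mem_range] at hi hni
    omega

lemma flagS_top (t : ℕ) : 2 * flagS t t = t * t + t := by
  have h1 : flagS t t = (∑ j ∈ Finset.range t, j) + t := by
    calc flagS t t = ∑ j ∈ Finset.range t, (t - (t - 1 - j)) := by
          rw [flagS]
          exact (Finset.sum_range_reflect (fun i => t - i) t).symm
      _ = ∑ j ∈ Finset.range t, (j + 1) := by
          refine Finset.sum_congr rfl ?_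
          intro j hj
          simp only [Finset.mem_range] at hj
          omega
      _ = (∑ j ∈ Finset.range t, j) + t := by
          rw [Finset.sum_add_distrib]
          simp
  have h2 := Finset.sum_range_id_mul_two t
  cases t with
  | zero => simp [flagS]
  | succ n =>
    have h3 : (n + 1) * (n + 1 - 1) + 2 * (n + 1) = (n + 1) * (n + 1) + (n + 1) := by
      simp only [Nat.add_sub_cancel]
      ring
    omega

/- ### the upper bound -/

lemma flag_upper (t : ℕ) (ht : 1 ≤ t) :
    ∀ N L, L.length ≤ N → FlagNoStop t L →
      onesCount L ≤ t ∧
      L.length + 1 ≤ flagS t (onesCount (L ++ [true])) + onesCount L := by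
  intro N
  induction N with
  | zero =>
    intro L hl hF
    have : L = [] := List.length_eq_zero_iff.mp (Nat.le_zero.mp hl)
    subst this
    refine ⟨by simp [onesCount], ?_⟩
    have : onesCount ([] ++ [true]) = 1 := rfl
    rw [this, flagS_one]
    simpa [onesCount] using ht
  | succ N ih =>
    intro L hl hF
    rcases flag_dec L with ⟨γ, rfl⟩ | ⟨A, γ, rfl⟩
    · -- all-zero string
      have hγ : γ ≤ t - 1 := (hF _ [] (by simp) (Or.inl rfl)).2 γ rfl
      refine ⟨by simp [onesCount_replicate], ?_⟩
      rw [onesCount_replicate, onesCount_replicate_append]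
      have h1 : onesCount [true] = 1 := rfl
      rw [h1, flagS_one]
      simp only [List.length_replicate]
      omega
    · -- L = A ++ true :: replicate γ false
      have hA : FlagNoStop t A := flag_restrict hF
      have hcond : onesCount A + γ ≤ t - 1 :=
        (hF (A ++ true :: List.replicate γ false) [] (by simp) (Or.inl rfl)).1 A γ (by simp)
      have hlenA : A.length ≤ N := by
        have := congrArg List.length (rfl : A ++ true :: List.replicate γ false
          = A ++ true :: List.replicate γ false)
        simp only [List.length_append, List.length_cons, List.length_replicate] at hl
        omega
      obtain ⟨ihc, ihlen⟩ := ih A hlenA hA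
      have hb := onesCount_append_true A
      have haL : onesCount (A ++ true :: List.replicate γ false)
          = onesCount (A ++ [true]) := by
        rw [show A ++ true :: List.replicate γ false
            = (A ++ [true]) ++ List.replicate γ false by simp]
        exact onesCount_append_replicate _ _
      have haA : onesCount A ≤ t - 1 := le_trans (Nat.le_add_right _ _) hcond
      constructor
      · rw [haL]; omega
      · cases γ with
        | zero =>
          have hbL : onesCount ((A ++ true :: List.replicate 0 false) ++ [true])
              = onesCount A + 1 := by
            rw [show (A ++ true :: List.replicate 0 false) ++ [true]
                = A ++ [true, true] by simp]
            exact onesCount_append_true_true A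
          rw [hbL, haL]
          have e1 : flagS t (onesCount A + 1)
              = flagS t (onesCount A) + (t - onesCount A) := flagS_succ _ _
          rcases (by omega : onesCount (A ++ [true]) = onesCount A ∨
              onesCount (A ++ [true]) = onesCount A + 1) with h | h <;>
            rw [h] at ihlen <;>
            simp only [List.length_append, List.length_cons, List.length_replicate] <;>
            omega
        | succ g =>
          have hbL : onesCount ((A ++ true :: List.replicate (g + 1) false) ++ [true])
              = onesCount (A ++ [true]) + 1 := by
            rw [show (A ++ true :: List.replicate (g + 1) false) ++ [true]
                = (A ++ [true]) ++ (false :: (List.replicate g false ++ [true])) by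
                  simp [List.replicate_succ]]
            rw [onesCount_append_false, onesCount_replicate_append]
            rfl
          rw [hbL, haL]
          have e1 : flagS t (onesCount (A ++ [true]) + 1)
              = flagS t (onesCount (A ++ [true])) + (t - onesCount (A ++ [true])) :=
            flagS_succ _ _
          simp only [List.length_append, List.length_cons, List.length_replicate]
          omega

/- ### the extremal witness -/

def flagWitness (t : ℕ) : ℕ → List Bool
  | 0 => List.replicate (t - 1) false
  | k + 1 => flagWitness t k ++ true :: List.replicate (t - 1 - k) false

lemma flagWitness_onesCount (t : ℕ) :
    ∀ k, k ≤ t - 1 → ∀ Z, onesCount (flagWitness t k ++ Z) = k + onesCount Z := by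
  intro k
  induction k with
  | zero =>
    intro _ Z
    simp [flagWitness, onesCount_replicate_append]
  | succ k ih =>
    intro hk Z
    have hk' : k ≤ t - 1 := by omega
    have hrep : t - 1 - k = (t - 2 - k) + 1 := by omega
    show onesCount ((flagWitness t k ++ true :: List.replicate (t - 1 - k) false) ++ Z) = _
    rw [hrep, List.replicate_succ,
      show (flagWitness t k ++ true :: false :: List.replicate (t - 2 - k) false) ++ Z
        = flagWitness t k ++ (true :: false :: (List.replicate (t - 2 - k) false ++ Z)) by
          simp]
    rw [ih hk']
    have : onesCount (true :: false :: (List.replicate (t - 2 - k) false ++ Z))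
        = 1 + onesCount (List.replicate (t - 2 - k) false ++ Z) := rfl
    rw [this, onesCount_replicate_append]
    omega

lemma flagWitness_flag (t : ℕ) (ht : 1 ≤ t) :
    ∀ k, k ≤ t → FlagNoStop t (flagWitness t k) := by
  intro k
  induction k with
  | zero => intro _; exact flag_replicate le_rfl
  | succ k ih =>
    intro hk
    refine flag_extend (ih (by omega)) ?_
    have : onesCount (flagWitness t k) = k := by
      simpa [onesCount] using flagWitness_onesCount t k (by omega) []
    rw [this]
    omega

lemma flagWitness_length (t : ℕ) (ht : 1 ≤ t) :
    ∀ k, k ≤ t → (flagWitness t k).length = (t - 1) + flagS t k := by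
  intro k
  induction k with
  | zero => intro _; simp [flagWitness, flagS]
  | succ k ih =>
    intro hk
    show (flagWitness t k ++ true :: List.replicate (t - 1 - k) false).length = _
    rw [List.length_append, ih (by omega), flagS_succ]
    simp only [List.length_cons, List.length_replicate]
    omega


/-- Flag-FTEC adaptive stopping bound: the maximum length of a binary string for which
the stopping condition `α + γ ≥ t` never holds at any run boundary is `t(t+3)/2 − 1`. -/
theorem max_flag_no_stop (t : ℕ) (ht : 1 ≤ t) :
    IsGreatest {n | ∃ L : List Bool, L.length = n ∧ FlagNoStop t L}
      (t * (t + 3) / 2 - 1) := by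
  have hS := flagS_top t
  have hmul : t * (t + 3) = t * t + 3 * t := by ring
  constructor
  · refine ⟨flagWitness t t, ?_, flagWitness_flag t ht t le_rfl⟩
    rw [flagWitness_length t ht t le_rfl, hmul]
    omega
  · rintro n ⟨L, rfl, hF⟩
    obtain ⟨ha, hlen⟩ := flag_upper t ht L.length L le_rfl hF
    have hSle := flagS_le t (onesCount (L ++ [true]))
    rw [hmul]
    omega
end

section
/- Let t ≥ 1 be odd. Any binary string of length ((t+3)/2)² − 2 contains a usable zero-run, i.e., writing it as η₁ 1 η₂ 1 ⋯ 1 η_c, there exists a zero-run η_j with positive length γ_j such that α_j + β_j + γ_j ≥ t, OR the string contains at least t non-overlapping 11 substrings. Here α_j and β_j count non-overlapping 11 substrings plus remaining ones strictly before and after the block 1η_j1 respectively (with α₁ = 0, β_c = 0). -/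
/-- Greedy count of non-overlapping `11` substrings. -/
def elevenCount : List Bool → ℕ
  | [] => 0
  | [_] => 0
  | true :: true :: l => 1 + elevenCount l
  | _ :: b :: l => elevenCount (b :: l)

/-- The string contains a usable zero-run: a zero-run of positive length `γ` with
`α + β + γ ≥ t`, where `α`, `β` count non-overlapping `11` substrings plus remaining
ones strictly before and after the block `1 0^γ 1` (boundary conventions included). -/
def ExistsUsableRun (t : ℕ) (L : List Bool) : Prop :=
  (∃ A B γ, 0 < γ ∧ L = A ++ [true] ++ List.replicate γ false ++ [true] ++ B ∧
      t ≤ onesCount A + onesCount B + γ) ∨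
  (∃ B γ, 0 < γ ∧ L = List.replicate γ false ++ [true] ++ B ∧ t ≤ onesCount B + γ) ∨
  (∃ A γ, 0 < γ ∧ L = A ++ [true] ++ List.replicate γ false ∧ t ≤ onesCount A + γ) ∨
  (∃ γ, 0 < γ ∧ L = List.replicate γ false ∧ t ≤ γ)

lemma onesCount_append (X Y : List Bool) (hY : Y.head? ≠ some true) :
    onesCount (X ++ Y) = onesCount X + onesCount Y := by
  induction X using onesCount.induct with
  | case1 => simp [show onesCount [] = 0 from rfl]
  | case2 l ih => simpa [onesCount] using ih
  | case3 =>
    cases Y with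
    | nil => simp [onesCount]
    | cons y Y =>
      cases y
      · show onesCount (true :: false :: Y) = 1 + onesCount (false :: Y)
        simp [onesCount]
      · simp at hY
  | case4 x l ih =>
    show onesCount (true :: x :: (l ++ Y)) = 1 + onesCount l + onesCount Y
    rw [show onesCount (true :: x :: (l ++ Y)) = 1 + onesCount (l ++ Y) from rfl, ih]
    omega

lemma elevenCount_append (X Y : List Bool) (hY : Y.head? ≠ some true) :
    elevenCount (X ++ Y) = elevenCount X + elevenCount Y := by
  induction X using elevenCount.induct with
  | case1 => simp [show elevenCount [] = 0 from rfl]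
  | case2 x =>
    cases Y with
    | nil => simp [elevenCount]
    | cons y Y =>
      cases y
      · show elevenCount (x :: false :: Y) = elevenCount [x] + elevenCount (false :: Y)
        cases x <;> simp [elevenCount]
      · simp at hY
  | case3 l ih =>
    show elevenCount (true :: true :: (l ++ Y)) = 1 + elevenCount l + elevenCount Y
    rw [show elevenCount (true :: true :: (l ++ Y)) = 1 + elevenCount (l ++ Y) from rfl, ih]
    omega
  | case4 x b l hne ih =>
    show elevenCount (x :: b :: (l ++ Y)) = elevenCount (x :: b :: l) + elevenCount Y
    have h1 : elevenCount (x :: b :: (l ++ Y)) = elevenCount (b :: (l ++ Y)) := by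
      match x, b, hne with
      | false, b, _ => cases b <;> simp [elevenCount]
      | true, false, _ => rfl
      | true, true, h => exact (h rfl rfl).elim
    have h2 : elevenCount (x :: b :: l) = elevenCount (b :: l) := by
      match x, b, hne with
      | false, b, _ => cases b <;> simp [elevenCount]
      | true, false, _ => rfl
      | true, true, h => exact (h rfl rfl).elim
    rw [h1, h2]
    exact ih

lemma onesCount_repF (γ : ℕ) (X : List Bool) :
    onesCount (List.replicate γ false ++ X) = onesCount X := by
  induction γ with
  | zero => simp
  | succ n ih => simpa [List.replicate_succ, onesCount] using ih

lemma onesCount_repT (n : ℕ) : onesCount (List.replicate n true) = (n + 1) / 2 := by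
  induction n using Nat.strong_induction_on with
  | _ n ih =>
    match n with
    | 0 => simp [onesCount]
    | 1 => simp [onesCount]
    | (m+2) =>
      have : List.replicate (m+2) true = true :: true :: List.replicate m true := by
        simp [List.replicate_succ]
      rw [this, show onesCount (true :: true :: List.replicate m true)
        = 1 + onesCount (List.replicate m true) from rfl, ih m (by omega)]
      omega

lemma elevenCount_repT (n : ℕ) : elevenCount (List.replicate n true) = n / 2 := by
  induction n using Nat.strong_induction_on with
  | _ n ih =>
    match n with
    | 0 => simp [elevenCount]
    | 1 => simp [elevenCount]
    | (m+2) =>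
      have : List.replicate (m+2) true = true :: true :: List.replicate m true := by
        simp [List.replicate_succ]
      rw [this, show elevenCount (true :: true :: List.replicate m true)
        = 1 + elevenCount (List.replicate m true) from rfl, ih m (by omega)]
      omega

lemma onesCount_repT_append (n : ℕ) (Y : List Bool) (hY : Y.head? ≠ some true) :
    onesCount (List.replicate n true ++ Y) = (n + 1) / 2 + onesCount Y := by
  rw [onesCount_append _ _ hY, onesCount_repT]

lemma exists_split (b : Bool) (l : List Bool) :
    ∃ n r, l = List.replicate n b ++ r ∧ r.head? ≠ some b := by
  induction l with
  | nil => exact ⟨0, [], by simp, by simp⟩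
  | cons x l ih =>
    by_cases hx : x = b
    · obtain ⟨n, r, h1, h2⟩ := ih
      exact ⟨n + 1, r, by simp [List.replicate_succ, hx, h1], h2⟩
    · exact ⟨0, x :: l, by simp, by simpa using hx⟩

lemma onesCount_cons_le : ∀ (l : List Bool) (x : Bool),
    onesCount l ≤ onesCount (x :: l) ∧ onesCount (x :: l) ≤ 1 + onesCount l := by
  intro l
  induction l using onesCount.induct with
  | case1 => intro x; cases x <;> simp [onesCount]
  | case2 l ih =>
    intro x
    cases x
    · simp [onesCount]
    · show onesCount (false :: l) ≤ onesCount (true :: false :: l) ∧ _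
      rw [show onesCount (true :: false :: l) = 1 + onesCount l from rfl,
          show onesCount (false :: l) = onesCount l from rfl]
      omega
  | case3 =>
    intro x
    cases x <;> simp [onesCount]
  | case4 y l ih =>
    intro x
    cases x
    · simp [onesCount]
    · rw [show onesCount (true :: true :: y :: l) = 1 + onesCount (y :: l) from rfl,
          show onesCount (true :: y :: l) = 1 + onesCount l from rfl]
      have := ih y
      omega

lemma onesCount_repF' (γ : ℕ) : onesCount (List.replicate γ false) = 0 := by
  simpa [onesCount] using onesCount_repF γ []

lemma step_ineq (τ S b o C u₁ γ₀ ln1 : ℤ)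
    (hb1 : b ≤ 1) (ho1 : o ≤ 1)
    (hC : 1 ≤ C) (hγ : 1 ≤ γ₀)
    (hbound : γ₀ + S + (C - o) + u₁ ≤ τ + b)
    (hIH : ln1 ≤ (u₁ + 1) * (τ + o - (S + C) - u₁) + u₁ * (3 - o)) :
    γ₀ + (2 * C - o) + ln1 ≤ (C + u₁ + 1) * (τ + b - S - (C + u₁)) + (C + u₁) * (3 - b) := by
  have hD' : 0 ≤ τ + o - (S + C) - u₁ := by linarith
  nlinarith [mul_nonneg (by linarith : (0:ℤ) ≤ C - 1) hD',
             mul_nonneg (by linarith : (0:ℤ) ≤ C) (by linarith : (0:ℤ) ≤ 1 - o)]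

lemma main (τ : ℕ) : ∀ n (R : List Bool), R.length ≤ n → ∀ (s b : ℕ), b ≤ 1 →
    R.head? ≠ some true →
    (∀ γ B, 0 < γ → R = List.replicate γ false ++ [true] ++ B →
        s + onesCount B + γ ≤ τ + b) →
    (∀ A B γ, 0 < γ → A ≠ [] →
        R = A ++ [true] ++ List.replicate γ false ++ [true] ++ B →
        s + onesCount A + onesCount B + γ ≤ τ) →
    (∀ A γ, 0 < γ → A ≠ [] → R = A ++ [true] ++ List.replicate γ false →
        s + onesCount A + γ ≤ τ) →
    (∀ γ, 0 < γ → R = List.replicate γ false → s + γ ≤ τ + b) →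
    (R.length : ℤ) ≤
      max (((onesCount R : ℤ) + 1) * ((τ : ℤ) + (b : ℤ) - (s : ℤ) - (onesCount R : ℤ))
        + (onesCount R : ℤ) * (3 - (b : ℤ))) 0 := by
  intro n
  induction n with
  | zero =>
    intro R hRn s b _ _ _ _ _ _
    rw [List.length_eq_zero_iff.mp (Nat.le_zero.mp hRn)]
    exact le_trans (by norm_num) (le_max_right _ 0)
  | succ n ih =>
    intro R hRn s b hb hhead Hlead Hint Htail Hzero
    rcases R with _ | ⟨x, R'⟩
    · exact le_trans (by norm_num) (le_max_right _ 0)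
    have hx : x = false := by
      cases x
      · rfl
      · simp at hhead
    subst hx
    obtain ⟨γ₀, S, hRs, hSh⟩ := exists_split false (false :: R')
    have hγ₀ : 1 ≤ γ₀ := by
      rcases γ₀ with _ | γ
      · simp at hRs; rw [← hRs] at hSh; simp at hSh
      · omega
    rcases S with _ | ⟨y, S'⟩
    · -- R is all zeros
      have hR0 : false :: R' = List.replicate γ₀ false := by simpa using hRs
      have hz := Hzero γ₀ hγ₀ hR0
      rw [hR0, onesCount_repF', List.length_replicate]
      refine le_trans ?_ (le_max_left _ _)
      push_cast
      omega
    have hy : y = true := by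
      cases y
      · simp at hSh
      · rfl
    subst hy
    obtain ⟨a, R₁, hS2, hR1h⟩ := exists_split true (true :: S')
    rcases a with _ | a''
    · simp at hS2; rw [← hS2] at hR1h; simp at hR1h
    have hR : false :: R' = List.replicate γ₀ false ++ (List.replicate (a''+1) true ++ R₁) := by
      rw [hRs, hS2]
    set u₁ := onesCount R₁ with hu₁def
    -- P1
    have P1 : ∀ γ B, 0 < γ → R₁ = List.replicate γ false ++ [true] ++ B →
        (s + (a''+2)/2) + onesCount B + γ ≤ τ + (a''+1) % 2 := by
      intro γ B hγ hEq
      have hAne : List.replicate γ₀ false ++ List.replicate a'' true ≠ [] := by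
        apply List.ne_nil_of_length_pos
        simp; omega
      have hEqR : false :: R' = (List.replicate γ₀ false ++ List.replicate a'' true)
          ++ [true] ++ List.replicate γ false ++ [true] ++ B := by
        rw [hR, hEq, List.replicate_succ']
        simp [List.append_assoc]
      have hI := Hint _ B γ hγ hAne hEqR
      have hocA : onesCount (List.replicate γ₀ false ++ List.replicate a'' true)
          = (a''+1)/2 := by
        rw [onesCount_repF, onesCount_repT]
      rw [hocA] at hI
      omega
    -- P2
    have P2 : ∀ A B γ, 0 < γ → A ≠ [] →
        R₁ = A ++ [true] ++ List.replicate γ false ++ [true] ++ B →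
        (s + (a''+2)/2) + onesCount A + onesCount B + γ ≤ τ := by
      intro A B γ hγ hAne hEq
      have hAhead : A.head? ≠ some true := by
        rcases A with _ | ⟨z, A'⟩
        · exact absurd rfl hAne
        · have : R₁.head? = some z := by rw [hEq]; rfl
          rw [this] at hR1h
          simpa using hR1h
      have hAne2 : List.replicate γ₀ false ++ (List.replicate (a''+1) true ++ A) ≠ [] := by
        apply List.ne_nil_of_length_pos
        simp
      have hEqR : false :: R' = (List.replicate γ₀ false ++ (List.replicate (a''+1) true ++ A))
          ++ [true] ++ List.replicate γ false ++ [true] ++ B := by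
        rw [hR, hEq]
        simp [List.append_assoc]
      have hI := Hint _ B γ hγ hAne2 hEqR
      have hocA : onesCount (List.replicate γ₀ false ++ (List.replicate (a''+1) true ++ A))
          = (a''+2)/2 + onesCount A := by
        rw [onesCount_repF, onesCount_repT_append _ _ hAhead]
      rw [hocA] at hI
      omega
    -- P3
    have P3 : ∀ A γ, 0 < γ → A ≠ [] → R₁ = A ++ [true] ++ List.replicate γ false →
        (s + (a''+2)/2) + onesCount A + γ ≤ τ := by
      intro A γ hγ hAne hEq
      have hAhead : A.head? ≠ some true := by
        rcases A with _ | ⟨z, A'⟩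
        · exact absurd rfl hAne
        · have : R₁.head? = some z := by rw [hEq]; rfl
          rw [this] at hR1h
          simpa using hR1h
      have hAne2 : List.replicate γ₀ false ++ (List.replicate (a''+1) true ++ A) ≠ [] := by
        apply List.ne_nil_of_length_pos
        simp
      have hEqR : false :: R' = (List.replicate γ₀ false ++ (List.replicate (a''+1) true ++ A))
          ++ [true] ++ List.replicate γ false := by
        rw [hR, hEq]
        simp [List.append_assoc]
      have hI := Htail _ γ hγ hAne2 hEqR
      have hocA : onesCount (List.replicate γ₀ false ++ (List.replicate (a''+1) true ++ A))
          = (a''+2)/2 + onesCount A := by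
        rw [onesCount_repF, onesCount_repT_append _ _ hAhead]
      rw [hocA] at hI
      omega
    -- P4
    have P4 : ∀ γ, 0 < γ → R₁ = List.replicate γ false →
        (s + (a''+2)/2) + γ ≤ τ + (a''+1) % 2 := by
      intro γ hγ hEq
      have hAne : List.replicate γ₀ false ++ List.replicate a'' true ≠ [] := by
        apply List.ne_nil_of_length_pos
        simp; omega
      have hEqR : false :: R' = (List.replicate γ₀ false ++ List.replicate a'' true)
          ++ [true] ++ List.replicate γ false := by
        rw [hR, hEq, List.replicate_succ']
        simp [List.append_assoc]
      have hI := Htail _ γ hγ hAne hEqR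
      have hocA : onesCount (List.replicate γ₀ false ++ List.replicate a'' true)
          = (a''+1)/2 := by
        rw [onesCount_repF, onesCount_repT]
      rw [hocA] at hI
      omega
    have hlenR : (false :: R').length = γ₀ + (a''+1) + R₁.length := by
      rw [hR]; simp; omega
    have hlen1 : R₁.length ≤ n := by
      rw [hlenR] at hRn
      omega
    have IH := ih R₁ hlen1 (s + (a''+2)/2) ((a''+1) % 2) (by omega) hR1h P1 P2 P3 P4
    -- bound on γ₀
    have hG := Hlead γ₀ (List.replicate a'' true ++ R₁) hγ₀ (by
      rw [hR, List.replicate_succ]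
      simp)
    rw [onesCount_repT_append _ _ hR1h] at hG
    -- counts
    have hu : onesCount (false :: R') = (a''+2)/2 + u₁ := by
      rw [hR, onesCount_repF, onesCount_repT_append _ _ hR1h]
    -- F' nonneg
    have hD' : (0:ℤ) ≤ (τ:ℤ) + ((a''+1) % 2 : ℕ) - ((s:ℤ) + ((a''+2)/2 : ℕ)) - (u₁:ℤ) := by
      push_cast
      omega
    have hmax : max (((u₁:ℤ) + 1) * ((τ:ℤ) + (((a''+1) % 2 : ℕ)) - ((s + (a''+2)/2 : ℕ)) - (u₁:ℤ))
        + (u₁:ℤ) * (3 - (((a''+1) % 2 : ℕ)))) 0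
        = ((u₁:ℤ) + 1) * ((τ:ℤ) + (((a''+1) % 2 : ℕ)) - ((s + (a''+2)/2 : ℕ)) - (u₁:ℤ))
        + (u₁:ℤ) * (3 - (((a''+1) % 2 : ℕ))) := by
      apply max_eq_left
      have h1 : (0:ℤ) ≤ (τ:ℤ) + (((a''+1) % 2 : ℕ)) - ((s + (a''+2)/2 : ℕ)) - (u₁:ℤ) := by
        push_cast
        push_cast at hD'
        linarith
      have h2 : (0:ℤ) ≤ 3 - (((a''+1) % 2 : ℕ):ℤ) := by
        have : (a''+1) % 2 ≤ 1 := by omega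
        push_cast
        omega
      positivity
    rw [hmax] at IH
    rw [Nat.cast_add] at IH
    -- final
    rw [hlenR, hu]
    refine le_trans ?_ (le_max_left _ _)
    have hstep := step_ineq (τ:ℤ) (s:ℤ) (b:ℤ) (((a''+1) % 2 : ℕ):ℤ) (((a''+2)/2 : ℕ):ℤ)
      (u₁:ℤ) (γ₀:ℤ) (R₁.length:ℤ)
      (by exact_mod_cast hb) (by push_cast; omega)
      (by push_cast; omega) (by exact_mod_cast hγ₀)
      (by push_cast; omega)
      (by linarith [IH])
    have e1 : ((γ₀ + (a''+1) + R₁.length : ℕ) : ℤ)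
        = (γ₀:ℤ) + (2 * (((a''+2)/2 : ℕ):ℤ) - (((a''+1) % 2 : ℕ):ℤ)) + (R₁.length:ℤ) := by
      push_cast; omega
    have e2 : (((a''+2)/2 + u₁ : ℕ) : ℤ) = (((a''+2)/2 : ℕ):ℤ) + (u₁:ℤ) := by
      push_cast; ring
    rw [e1, e2]
    linarith [hstep]

lemma top_ineq (τ o C u₁ ln1 : ℤ)
    (ho1 : o ≤ 1) (hC : 1 ≤ C) (hu1 : 0 ≤ u₁)
    (hu : C + u₁ ≤ τ + 1)
    (hIH : ln1 ≤ (u₁ + 1) * (τ + o - C - u₁) + u₁ * (3 - o)) :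
    (2 * C - o) + ln1 ≤ (C + u₁ + 1) * (τ - (C + u₁)) + (C + u₁) * 3 := by
  nlinarith [mul_nonneg (by linarith : (0:ℤ) ≤ C) (by linarith : (0:ℤ) ≤ τ + 1 - C - u₁)]

set_option maxHeartbeats 1000000 in
/-- Stopping guarantee of the adaptive strong decoder for odd `t`: any binary string of
length `((t+3)/2)² − 2` contains a usable zero-run or at least `t` non-overlapping `11`
substrings. -/
theorem strong_decoder_stops_odd (t : ℕ) (ht : 1 ≤ t) (hodd : Odd t) (L : List Bool)
    (hlen : L.length = ((t + 3) / 2) ^ 2 - 2) :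
    ExistsUsableRun t L ∨ t ≤ elevenCount L := by
  by_contra hcon
  push_neg at hcon
  obtain ⟨hU, hE⟩ := hcon
  unfold ExistsUsableRun at hU
  push_neg at hU
  obtain ⟨h1, h2, h3, h4⟩ := hU
  obtain ⟨k, hk⟩ := hodd
  have hm : (t + 3) / 2 = k + 2 := by omega
  rw [hm] at hlen
  have hsq : k * k + 4 * k + 4 = (k + 2) ^ 2 := by ring
  have hlen' : L.length + 2 = k * k + 4 * k + 4 := by omega
  have hlenZ : (L.length : ℤ) = ((k : ℤ) + 2) ^ 2 - 2 := by
    have h2 : (L.length : ℤ) + 2 = (k:ℤ) * (k:ℤ) + 4 * (k:ℤ) + 4 := by exact_mod_cast hlen'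
    have h3 : ((k:ℤ) + 2) ^ 2 = (k:ℤ) * (k:ℤ) + 4 * (k:ℤ) + 4 := by ring
    linarith
  have hkt : t = 2 * k + 1 := by omega
  have hquad : ∀ u : ℕ, ((u:ℤ) + 1) * ((2*k : ℕ) + (0:ℕ) - (0:ℕ) - (u:ℤ)) + (u:ℤ) * (3 - (0:ℕ))
      ≤ ((k : ℤ) + 2) ^ 2 - 3 := by
    intro u
    push_cast
    nlinarith [sq_nonneg ((u:ℤ) - ((k:ℤ) + 1))]
  have hz3 : (0:ℤ) ≤ ((k : ℤ) + 2) ^ 2 - 3 := by nlinarith [sq_nonneg (k:ℤ)]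
  rcases L with _ | ⟨x, L'⟩
  · simp at hlen'
  cases x
  · -- L starts with false
    have hmain := main (2*k) (false :: L').length (false :: L') le_rfl 0 0 (by norm_num)
      (by simp)
      (fun γ B hγ hEq => by have := h2 B γ hγ hEq; omega)
      (fun A B γ hγ _ hEq => by have := h1 A B γ hγ hEq; omega)
      (fun A γ hγ _ hEq => by have := h3 A γ hγ hEq; omega)
      (fun γ hγ hEq => by have := h4 γ hγ hEq; omega)
    have hfin : ((false :: L').length : ℤ) ≤ ((k : ℤ) + 2) ^ 2 - 3 :=
      le_trans hmain (max_le (hquad _) hz3)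
    linarith
  · -- L starts with true
    obtain ⟨a, L₁, hS, hL1h⟩ := exists_split true (true :: L')
    rcases a with _ | a''
    · simp at hS; rw [← hS] at hL1h; simp at hL1h
    set u₁ := onesCount L₁ with hu₁def
    -- propagated hypotheses for L₁
    have Q1 : ∀ γ B, 0 < γ → L₁ = List.replicate γ false ++ [true] ++ B →
        ((a''+2)/2) + onesCount B + γ ≤ 2*k + (a''+1) % 2 := by
      intro γ B hγ hEq
      have hEqR : true :: L' = (List.replicate a'' true)
          ++ [true] ++ List.replicate γ false ++ [true] ++ B := by
        rw [hS, hEq, List.replicate_succ']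
        simp [List.append_assoc]
      have hI := h1 _ B γ hγ hEqR
      rw [onesCount_repT] at hI
      omega
    have Q2 : ∀ A B γ, 0 < γ → A ≠ [] →
        L₁ = A ++ [true] ++ List.replicate γ false ++ [true] ++ B →
        ((a''+2)/2) + onesCount A + onesCount B + γ ≤ 2*k := by
      intro A B γ hγ hAne hEq
      have hAhead : A.head? ≠ some true := by
        rcases A with _ | ⟨z, A'⟩
        · exact absurd rfl hAne
        · have : L₁.head? = some z := by rw [hEq]; rfl
          rw [this] at hL1h
          simpa using hL1h
      have hEqR : true :: L' = (List.replicate (a''+1) true ++ A)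
          ++ [true] ++ List.replicate γ false ++ [true] ++ B := by
        rw [hS, hEq]
        simp [List.append_assoc]
      have hI := h1 _ B γ hγ hEqR
      rw [onesCount_repT_append _ _ hAhead] at hI
      omega
    have Q3 : ∀ A γ, 0 < γ → A ≠ [] → L₁ = A ++ [true] ++ List.replicate γ false →
        ((a''+2)/2) + onesCount A + γ ≤ 2*k := by
      intro A γ hγ hAne hEq
      have hAhead : A.head? ≠ some true := by
        rcases A with _ | ⟨z, A'⟩
        · exact absurd rfl hAne
        · have : L₁.head? = some z := by rw [hEq]; rfl
          rw [this] at hL1h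
          simpa using hL1h
      have hEqR : true :: L' = (List.replicate (a''+1) true ++ A)
          ++ [true] ++ List.replicate γ false := by
        rw [hS, hEq]
        simp [List.append_assoc]
      have hI := h3 _ γ hγ hEqR
      rw [onesCount_repT_append _ _ hAhead] at hI
      omega
    have Q4 : ∀ γ, 0 < γ → L₁ = List.replicate γ false →
        ((a''+2)/2) + γ ≤ 2*k + (a''+1) % 2 := by
      intro γ hγ hEq
      have hEqR : true :: L' = (List.replicate a'' true)
          ++ [true] ++ List.replicate γ false := by
        rw [hS, hEq, List.replicate_succ']
      have hI := h3 _ γ hγ hEqR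
      rw [onesCount_repT] at hI
      omega
    have IH := main (2*k) L₁.length L₁ le_rfl ((a''+2)/2) ((a''+1) % 2) (by omega) hL1h
      (fun γ B hγ hEq => by have := Q1 γ B hγ hEq; omega)
      (fun A B γ hγ hA hEq => by have := Q2 A B γ hγ hA hEq; omega)
      (fun A γ hγ hA hEq => by have := Q3 A γ hγ hA hEq; omega)
      (fun γ hγ hEq => by have := Q4 γ hγ hEq; omega)
    have hu : onesCount (true :: L') = (a''+2)/2 + u₁ := by
      rw [hS, onesCount_repT_append _ _ hL1h]
    have hlenT : (true :: L').length = (a''+1) + L₁.length := by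
      rw [hS]; simp
    -- bound: (a''+2)/2 + u₁ ≤ 2k + 1
    have hub : (a''+2)/2 + u₁ ≤ 2*k + 1 := by
      rcases L₁ with _ | ⟨z, L₂⟩
      · -- L₁ = []
        have he : elevenCount (true :: L') = (a''+1)/2 := by
          rw [hS]
          simpa using elevenCount_repT (a''+1)
        simp [hu₁def, show onesCount ([] : List Bool) = 0 from rfl]
        omega
      · have hz : z = false := by
          cases z
          · rfl
          · simp at hL1h
        subst hz
        obtain ⟨γ, S, hL2s, hSh⟩ := exists_split false (false :: L₂)
        have hγ : 1 ≤ γ := by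
          rcases γ with _ | γ'
          · simp at hL2s; rw [← hL2s] at hSh; simp at hSh
          · omega
        rcases S with _ | ⟨y, S'⟩
        · -- L₁ all zeros
          have hL1rep : false :: L₂ = List.replicate γ false := by simpa using hL2s
          have := Q4 γ hγ hL1rep
          have hu10 : u₁ = 0 := by rw [hu₁def, hL1rep, onesCount_repF']
          omega
        · have hy : y = true := by
            cases y
            · simp at hSh
            · rfl
          subst hy
          have := Q1 γ S' hγ (by rw [hL2s]; simp)
          have hu1b : u₁ ≤ 1 + onesCount S' := by
            rw [hu₁def, hL2s, onesCount_repF]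
            exact (onesCount_cons_le S' true).2
          omega
    set C := (a''+2)/2 with hCdef
    set o := (a''+1) % 2 with hodef
    have ho1 : o ≤ 1 := by omega
    have hC1 : 1 ≤ C := by omega
    have hao : a'' + 1 + o = 2 * C := by omega
    -- final contradiction
    by_cases hFpos : (0:ℤ) ≤ ((u₁:ℤ) + 1) * (((2*k : ℕ):ℤ) + (o:ℤ) - (C:ℤ) - (u₁:ℤ))
        + (u₁:ℤ) * (3 - (o:ℤ))
    · have IH' : (L₁.length : ℤ) ≤ ((u₁:ℤ) + 1) * (((2*k : ℕ):ℤ) + (o:ℤ) - (C:ℤ) - (u₁:ℤ))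
          + (u₁:ℤ) * (3 - (o:ℤ)) := le_trans IH (le_of_eq (max_eq_left hFpos))
      have htop := top_ineq (((2*k : ℕ)):ℤ) (o:ℤ) (C:ℤ) (u₁:ℤ) (L₁.length:ℤ)
        (by exact_mod_cast ho1) (by exact_mod_cast hC1) (by positivity)
        (by exact_mod_cast hub)
        IH'
      have hq2 : ((C:ℤ) + (u₁:ℤ) + 1) * (((2*k : ℕ):ℤ) - ((C:ℤ) + (u₁:ℤ)))
          + ((C:ℤ) + (u₁:ℤ)) * 3 ≤ ((k : ℤ) + 2) ^ 2 - 3 := by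
        have h5 := hquad (C + u₁)
        push_cast at h5 ⊢
        nlinarith [h5]
      have e1 : (((a''+1) + L₁.length : ℕ) : ℤ)
          = (2 * (C:ℤ) - (o:ℤ)) + (L₁.length:ℤ) := by
        push_cast
        omega
      rw [hlenT] at hlenZ
      rw [e1] at hlenZ
      linarith
    · -- F' < 0 : then L₁ = [] and elevenCount too big
      push_neg at hFpos
      have hIH0 : (L₁.length : ℤ) ≤ 0 :=
        le_trans IH (le_of_eq (max_eq_right (by linarith)))
      have hL10 : L₁ = [] := by
        have : L₁.length = 0 := by omega
        exact List.length_eq_zero_iff.mp this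
      have hu10 : u₁ = 0 := by rw [hu₁def, hL10]; rfl
      rw [hu10] at hFpos
      have hCbig : 2*k + o < C := by
        have h7 : 2*(k:ℤ) + (o:ℤ) - (C:ℤ) < 0 := by
          push_cast at hFpos
          linarith
        omega
      have he : elevenCount (true :: L') = (a''+1)/2 := by
        rw [hS, hL10]
        simpa using elevenCount_repT (a''+1)
      omega
end

section
/- Let t ≥ 2 be even. Consider binary strings δ' obtained by prepending a single 0 to an arbitrary binary string δ of length m. If m ≥ ((t+2)/2)·((t+4)/2) − 3, then δ' = 0δ contains a usable zero-run with respect to parameter t: writing δ' = η₁ 1 ⋯ 1 η_c, some zero-run η_j of positive length γ_j satisfies α_j + β_j + γ_j ≥ t, or δ' contains t non-overlapping 11 substrings. Consequently, performing ((t+2)/2)·((t+4)/2) − 2 rounds of syndrome measurement suffices for the weak adaptive decoder in the case of trivial first-round syndrome. -/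
def blocks : List (ℕ × ℕ) → List Bool
  | [] => []
  | (g, b) :: l => List.replicate g false ++ List.replicate b true ++ blocks l

def StartsF (L : List Bool) : Prop := L = [] ∨ ∃ M, L = false :: M

def ValidT : List (ℕ × ℕ) → Prop
  | [] => True
  | [(g, _)] => 1 ≤ g
  | (g, b) :: l => 1 ≤ g ∧ 1 ≤ b ∧ ValidT l

lemma oc_false_cons (M : List Bool) : onesCount (false :: M) = onesCount M := rfl

lemma oc_rep_false (g : ℕ) (M : List Bool) :
    onesCount (List.replicate g false ++ M) = onesCount M := by
  induction g with
  | zero => rfl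
  | succ n ih => simpa [List.replicate_succ, oc_false_cons] using ih

lemma oc_rep_true (b : ℕ) (M : List Bool) (hM : StartsF M) :
    onesCount (List.replicate b true ++ M) = (b + 1) / 2 + onesCount M := by
  induction b using Nat.strong_induction_on with
  | _ b ih =>
    match b with
    | 0 => simp
    | 1 =>
      rcases hM with h | ⟨M', h⟩ <;> subst h <;> simp [onesCount]
    | (n+2) =>
      have := ih n (by omega)
      simp only [List.replicate_succ, List.cons_append, onesCount]
      rw [this]
      omega

def Ssum (l : List (ℕ × ℕ)) : ℕ := (l.map (fun p => (p.2 + 1) / 2)).sum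
def gsum (l : List (ℕ × ℕ)) : ℕ := (l.map Prod.fst).sum
def bsum (l : List (ℕ × ℕ)) : ℕ := (l.map Prod.snd).sum
def oddsum (l : List (ℕ × ℕ)) : ℕ := (l.map (fun p => p.2 % 2)).sum

def olast : List (ℕ × ℕ) → ℕ
  | [] => 0
  | [(_, b)] => b % 2
  | _ :: l => olast l

lemma validT_tail {p : ℕ × ℕ} {l : List (ℕ × ℕ)} (h : ValidT (p :: l)) : ValidT l := by
  match l with
  | [] => trivial
  | q :: l' => exact h.2.2

lemma validT_head {p : ℕ × ℕ} {l : List (ℕ × ℕ)} (h : ValidT (p :: l)) : 1 ≤ p.1 := by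
  match l with
  | [] => exact h
  | q :: l' => exact h.1

lemma validT_b {p : ℕ × ℕ} {q : ℕ × ℕ} {l : List (ℕ × ℕ)} (h : ValidT (p :: q :: l)) :
    1 ≤ p.2 := h.2.1

lemma blocks_startsF {bl : List (ℕ × ℕ)} (h : ValidT bl) : StartsF (blocks bl) := by
  match bl with
  | [] => exact Or.inl rfl
  | (g, b) :: l =>
    have hg : 1 ≤ g := validT_head h
    right
    refine ⟨List.replicate (g - 1) false ++ List.replicate b true ++ blocks l, ?_⟩
    rw [blocks, show g = (g-1)+1 by omega, List.replicate_succ]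
    simp

lemma oc_blocks {bl : List (ℕ × ℕ)} (h : ValidT bl) : onesCount (blocks bl) = Ssum bl := by
  induction bl with
  | nil => rfl
  | cons p l ih =>
    obtain ⟨g, b⟩ := p
    rw [blocks, List.append_assoc, oc_rep_false, oc_rep_true _ _ (blocks_startsF (validT_tail h)),
      ih (validT_tail h)]
    simp [Ssum]

lemma len_blocks (bl : List (ℕ × ℕ)) : (blocks bl).length = gsum bl + bsum bl := by
  induction bl with
  | nil => rfl
  | cons p l ih =>
    obtain ⟨g, b⟩ := p
    simp [blocks, ih, gsum, bsum]
    ring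

lemma take_run : ∀ (L : List Bool), StartsF L → L ≠ [] →
    ∃ g M, 1 ≤ g ∧ L = List.replicate g false ++ M ∧ (M = [] ∨ ∃ M', M = true :: M') := by
  intro L
  induction L with
  | nil => intro _ h; exact absurd rfl h
  | cons a L' ih =>
    intro hS _
    have ha : a = false := by
      rcases hS with h | ⟨M, h⟩
      · simp at h
      · simp at h; exact h.1
    subst ha
    match L' with
    | [] => exact ⟨1, [], le_refl 1, by simp, Or.inl rfl⟩
    | true :: M => exact ⟨1, true :: M, le_refl 1, by simp, Or.inr ⟨M, rfl⟩⟩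
    | false :: M =>
      obtain ⟨g, M', hg, hEq, hM'⟩ := ih (Or.inr ⟨M, rfl⟩) (by simp)
      exact ⟨g + 1, M', by omega, by rw [List.replicate_succ]; simp [hEq], hM'⟩

lemma take_ones : ∀ (M : List Bool), (∃ M', M = true :: M') →
    ∃ b M', 1 ≤ b ∧ M = List.replicate b true ++ M' ∧ StartsF M' := by
  intro M
  induction M with
  | nil => rintro ⟨M', h⟩; simp at h
  | cons a M₀ ih =>
    rintro ⟨M', h⟩
    have ha : a = true := by simp at h; exact h.1
    subst ha
    match M₀ with
    | [] => exact ⟨1, [], le_refl 1, by simp, Or.inl rfl⟩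
    | false :: M₁ => exact ⟨1, false :: M₁, le_refl 1, by simp, Or.inr ⟨M₁, rfl⟩⟩
    | true :: M₁ =>
      obtain ⟨b, M', hb, hEq, hM'⟩ := ih ⟨M₁, rfl⟩
      exact ⟨b + 1, M', by omega, by rw [List.replicate_succ]; simp [hEq], hM'⟩

lemma rep_exists : ∀ (n : ℕ) (L : List Bool), L.length ≤ n → StartsF L →
    ∃ bl, ValidT bl ∧ L = blocks bl := by
  intro n
  induction n with
  | zero =>
    intro L hL _
    have : L = [] := List.eq_nil_of_length_eq_zero (by omega)
    exact ⟨[], trivial, by simp [this, blocks]⟩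
  | succ n ih =>
    intro L hL hS
    by_cases hnil : L = []
    · exact ⟨[], trivial, by simp [hnil, blocks]⟩
    obtain ⟨g, M, hg, hEq, hM⟩ := take_run L hS hnil
    rcases hM with h | h
    · refine ⟨[(g, 0)], hg, ?_⟩
      simp [blocks, hEq, h]
    obtain ⟨b, M', hb, hEq2, hM'⟩ := take_ones M h
    have hlen : M'.length ≤ n := by
      have h1 : L.length = g + (M.length) := by simp [hEq]
      have h2 : M.length = b + M'.length := by simp [hEq2]
      omega
    obtain ⟨bl', hV, hB⟩ := ih M' hlen hM'
    refine ⟨(g, b) :: bl', ?_, ?_⟩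
    · match bl' with
      | [] => exact hg
      | q :: l => exact ⟨hg, hb, hV⟩
    · rw [blocks, ← hB, List.append_assoc, ← hEq2, ← hEq]

def FC (t T : ℕ) : ℕ → List (ℕ × ℕ) → Prop
  | _, [] => True
  | c, (g, b) :: l => (g + T + 1 ≤ t + c + b % 2) ∧ FC t T (b % 2) l

lemma Ssum_cons (g b : ℕ) (l : List (ℕ × ℕ)) :
    Ssum ((g, b) :: l) = (b + 1) / 2 + Ssum l := by simp [Ssum]

lemma startsF_rep_false {g : ℕ} (hg : 1 ≤ g) (Y : List Bool) :
    StartsF (List.replicate g false ++ Y) := by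
  right
  exact ⟨List.replicate (g - 1) false ++ Y, by rw [show g = (g-1)+1 by omega, List.replicate_succ]; simp⟩

lemma rep_true_cons {b : ℕ} (hb : 1 ≤ b) :
    List.replicate b true = true :: List.replicate (b - 1) true := by
  conv_lhs => rw [show b = (b-1)+1 by omega, List.replicate_succ]

lemma rep_true_comm (n : ℕ) (Y : List Bool) :
    List.replicate n true ++ true :: Y = true :: (List.replicate n true ++ Y) := by
  induction n with
  | zero => simp
  | succ m ih => simp [List.replicate_succ, ih]

lemma oc_rep_true_nil (b : ℕ) : onesCount (List.replicate b true) = (b + 1) / 2 := by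
  simpa [onesCount] using oc_rep_true b [] (Or.inl rfl)

lemma extract_tail (t : ℕ) : ∀ (bl : List (ℕ × ℕ)), ValidT bl →
    ∀ (A : List Bool) (p c T : ℕ),
    (∀ X, StartsF X → onesCount (A ++ true :: X) = p + c + onesCount X) →
    onesCount A = p →
    p + c + Ssum bl = T →
    ¬ ExistsUsableRun t (A ++ true :: blocks bl) →
    FC t T c bl := by
  intro bl
  induction bl with
  | nil => intro _ _ _ _ _ _ _ _ _; trivial
  | cons q l ih =>
    obtain ⟨g, b⟩ := q
    intro hV A p c T hHC hA hT hns
    have hg : 1 ≤ g := validT_head hV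
    rw [Ssum_cons] at hT
    by_cases hb : 1 ≤ b
    case neg =>
      -- b = 0, so l = []
      have hb0 : b = 0 := by omega
      subst hb0
      have hl : l = [] := by
        match l with
        | [] => rfl
        | q' :: l' => exact absurd (validT_b hV) (by omega)
      subst hl
      have hdec : A ++ true :: blocks [(g, 0)] = A ++ [true] ++ List.replicate g false := by
        simp [blocks]
      have hlt : ¬ (t ≤ onesCount A + g) := fun hle =>
        hns (Or.inr (Or.inr (Or.inl ⟨A, g, hg, hdec, hle⟩)))
      refine ⟨?_, trivial⟩
      simp [Ssum] at hT
      omega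
    case pos =>
      have hblocks : blocks ((g, b) :: l)
          = List.replicate g false ++ (true :: (List.replicate (b-1) true ++ blocks l)) := by
        rw [blocks, rep_true_cons hb]
        simp
      have hSl : onesCount (List.replicate (b-1) true ++ blocks l) = (b-1+1)/2 + Ssum l := by
        rw [oc_rep_true _ _ (blocks_startsF (validT_tail hV)), oc_blocks (validT_tail hV)]
      have hdec : A ++ true :: blocks ((g, b) :: l)
          = A ++ [true] ++ List.replicate g false ++ [true]
            ++ (List.replicate (b-1) true ++ blocks l) := by
        rw [hblocks]; simp
      have hlt : ¬ (t ≤ onesCount A + onesCount (List.replicate (b-1) true ++ blocks l) + g) :=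
        fun hle => hns (Or.inl ⟨A, _, g, hg, hdec, hle⟩)
      rw [hA, hSl] at hlt
      constructor
      · omega
      · -- recurse on l
        set A' := A ++ true :: (List.replicate g false ++ List.replicate (b-1) true) with hA'
        have hocA' : onesCount A' = p + c + b / 2 := by
          rw [hA', hHC _ (startsF_rep_false hg _), oc_rep_false, oc_rep_true_nil]
          omega
        have hHC' : ∀ X, StartsF X →
            onesCount (A' ++ true :: X) = (p + c + b / 2) + b % 2 + onesCount X := by
          intro X hX
          have e1 : A' ++ true :: X
              = A ++ true :: (List.replicate g false ++ (List.replicate b true ++ X)) := by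
            rw [hA', rep_true_cons hb]
            simp [rep_true_comm]
          rw [e1, hHC _ (startsF_rep_false hg _), oc_rep_false, oc_rep_true _ _ hX]
          omega
        have e2 : A' ++ true :: blocks l = A ++ true :: blocks ((g, b) :: l) := by
          rw [hblocks, hA']
          simp [rep_true_comm]
        exact ih (validT_tail hV) A' (p + c + b/2) (b % 2) T hHC' hocA' (by omega)
          (by rw [e2]; exact hns)

lemma extract_head (t : ℕ) (g b : ℕ) (l : List (ℕ × ℕ)) (hV : ValidT ((g, b) :: l))
    (hns : ¬ ExistsUsableRun t (blocks ((g, b) :: l))) :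
    FC t (Ssum ((g, b) :: l)) 0 ((g, b) :: l) := by
  have hg : 1 ≤ g := validT_head hV
  by_cases hb : 1 ≤ b
  case neg =>
    have hb0 : b = 0 := by omega
    subst hb0
    have hl : l = [] := by
      match l with
      | [] => rfl
      | q' :: l' => exact absurd (validT_b hV) (by omega)
    subst hl
    have hdec : blocks [(g, 0)] = List.replicate g false := by simp [blocks]
    have hlt : ¬ (t ≤ g) := fun hle =>
      hns (Or.inr (Or.inr (Or.inr ⟨g, hg, hdec, hle⟩)))
    refine ⟨?_, trivial⟩
    simp [Ssum]
    omega
  case pos =>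
    have hblocks : blocks ((g, b) :: l)
        = List.replicate g false ++ (true :: (List.replicate (b-1) true ++ blocks l)) := by
      rw [blocks, rep_true_cons hb]
      simp
    have hSl : onesCount (List.replicate (b-1) true ++ blocks l) = (b-1+1)/2 + Ssum l := by
      rw [oc_rep_true _ _ (blocks_startsF (validT_tail hV)), oc_blocks (validT_tail hV)]
    have hdec : blocks ((g, b) :: l)
        = List.replicate g false ++ [true] ++ (List.replicate (b-1) true ++ blocks l) := by
      rw [hblocks]; simp
    have hlt : ¬ (t ≤ onesCount (List.replicate (b-1) true ++ blocks l) + g) :=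
      fun hle => hns (Or.inr (Or.inl ⟨_, g, hg, hdec, hle⟩))
    rw [hSl] at hlt
    rw [Ssum_cons]
    constructor
    · omega
    · set A' := List.replicate g false ++ List.replicate (b-1) true with hA'
      have hocA' : onesCount A' = b / 2 := by
        rw [hA', oc_rep_false, oc_rep_true_nil]
        omega
      have hHC' : ∀ X, StartsF X →
          onesCount (A' ++ true :: X) = b / 2 + b % 2 + onesCount X := by
        intro X hX
        have e1 : A' ++ true :: X = List.replicate g false ++ (List.replicate b true ++ X) := by
          rw [hA', rep_true_cons hb]
          simp [rep_true_comm]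
        rw [e1, oc_rep_false, oc_rep_true _ _ hX]
        omega
      have e2 : A' ++ true :: blocks l = blocks ((g, b) :: l) := by
        rw [hblocks, hA']
        simp [rep_true_comm]
      exact extract_tail t l (validT_tail hV) A' (b / 2) (b % 2) _ hHC' hocA' (by omega)
        (by rw [e2]; exact hns)

lemma gsum_cons (g b : ℕ) (l : List (ℕ × ℕ)) : gsum ((g, b) :: l) = g + gsum l := by
  simp [gsum]
lemma bsum_cons (g b : ℕ) (l : List (ℕ × ℕ)) : bsum ((g, b) :: l) = b + bsum l := by
  simp [bsum]
lemma oddsum_cons (g b : ℕ) (l : List (ℕ × ℕ)) : oddsum ((g, b) :: l) = b % 2 + oddsum l := by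
  simp [oddsum]
lemma olast_cons (g b : ℕ) (q : ℕ × ℕ) (l : List (ℕ × ℕ)) :
    olast ((g, b) :: q :: l) = olast (q :: l) := rfl

lemma fc_sum (t : ℕ) : ∀ (bl : List (ℕ × ℕ)) (c T : ℕ), FC t T c bl →
    gsum bl + bl.length * T + olast bl + bl.length ≤ bl.length * t + c + 2 * oddsum bl := by
  intro bl
  induction bl with
  | nil => intro c T _; simp [gsum, oddsum, olast]
  | cons q l ih =>
    obtain ⟨g, b⟩ := q
    intro c T hFC
    obtain ⟨h1, h2⟩ := hFC
    match l with
    | [] =>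
      simp [gsum, oddsum, olast]
      omega
    | q' :: l' =>
      have ihh := ih (b % 2) T h2
      rw [gsum_cons, oddsum_cons, olast_cons, List.length_cons, Nat.succ_mul, Nat.succ_mul]
      omega

lemma odd_le : ∀ (bl : List (ℕ × ℕ)), bl ≠ [] → oddsum bl + 1 ≤ bl.length + olast bl := by
  intro bl
  induction bl with
  | nil => intro h; exact absurd rfl h
  | cons q l ih =>
    obtain ⟨g, b⟩ := q
    intro _
    match l with
    | [] => simp [oddsum, olast]
    | q' :: l' =>
      have := ih (by simp)
      rw [oddsum_cons, olast_cons, List.length_cons]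
      omega

lemma len_le_Ssum : ∀ (bl : List (ℕ × ℕ)), ValidT bl → bl.length ≤ Ssum bl + 1 := by
  intro bl
  induction bl with
  | nil => simp
  | cons q l ih =>
    obtain ⟨g, b⟩ := q
    intro hV
    match l with
    | [] => simp
    | q' :: l' =>
      have hb : 1 ≤ b := validT_b hV
      have := ih (validT_tail hV)
      rw [Ssum_cons, List.length_cons]
      omega

lemma bsum_odd : ∀ (bl : List (ℕ × ℕ)), bsum bl + oddsum bl = 2 * Ssum bl := by
  intro bl
  induction bl with
  | nil => simp [bsum, oddsum, Ssum]
  | cons q l ih =>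
    obtain ⟨g, b⟩ := q
    rw [bsum_cons, oddsum_cons, Ssum_cons]
    omega

lemma key_lemma (t k S r : ℕ) (hk : t = k + k) (hrs : r ≤ S + 1) (hSt : S + 1 ≤ t) :
    r * t + 2 * S ≤ r * S + k * k + 3 * k := by
  zify
  have h1 : (0:ℤ) ≤ ((S:ℤ) + 1 - r) * ((t:ℤ) - S) :=
    mul_nonneg (by omega) (by omega)
  have ht : (t:ℤ) = (k:ℤ) + (k:ℤ) := by omega
  rcases le_or_gt S k with hc | hc
  · have h2 : (0:ℤ) ≤ ((k:ℤ) - S) * ((k:ℤ) + 1 - S) := mul_nonneg (by omega) (by omega)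
    nlinarith [h1, h2]
  · have h2 : (0:ℤ) ≤ ((S:ℤ) - k) * ((S:ℤ) - k - 1) := mul_nonneg (by omega) (by omega)
    nlinarith [h1, h2]

theorem final_test (t : ℕ) (ht : 2 ≤ t) (heven : Even t) (δ : List Bool)
    (hlen : ((t + 2) / 2) * ((t + 4) / 2) - 3 ≤ δ.length)
    (hU : ¬ ExistsUsableRun t (false :: δ)) : False := by
  obtain ⟨k, hk⟩ := heven
  have hk1 : 1 ≤ k := by omega
  have h1 : (t + 2) / 2 = k + 1 := by omega
  have h2 : (t + 4) / 2 = k + 2 := by omega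
  rw [h1, h2] at hlen
  have hexp : (k + 1) * (k + 2) = k * k + 3 * k + 2 := by ring
  obtain ⟨bl, hV, hL⟩ := rep_exists (false :: δ).length (false :: δ) le_rfl (Or.inr ⟨δ, rfl⟩)
  cases bl with
  | nil => simp [blocks] at hL
  | cons q l =>
    obtain ⟨g, b⟩ := q
    have hg : 1 ≤ g := validT_head hV
    have hFC := extract_head t g b l hV (by rw [← hL]; exact hU)
    obtain ⟨hFC1, -⟩ := hFC
    have hsum := fc_sum t ((g, b) :: l) 0 (Ssum ((g, b) :: l))
      (extract_head t g b l hV (by rw [← hL]; exact hU))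
    have hodd := odd_le ((g, b) :: l) (by simp)
    have hrs : ((g, b) :: l).length ≤ Ssum ((g, b) :: l) + 1 := len_le_Ssum ((g, b) :: l) hV
    have hbo := bsum_odd ((g, b) :: l)
    have hlenL : (false :: δ).length = gsum ((g, b) :: l) + bsum ((g, b) :: l) := by
      rw [hL, len_blocks]
    set S := Ssum ((g, b) :: l) with hS
    set r := ((g, b) :: l).length with hr
    have hStop : S + 1 ≤ t := by omega
    have hkey := key_lemma t k S r hk hrs (by omega)
    have hlc : (false :: δ).length = 1 + δ.length := by simp; omega
    omega

/-- Weak adaptive decoder, even `t`, trivial first syndrome: if `δ` has length at least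
`((t+2)/2)·((t+4)/2) − 3`, then the extended difference vector `0δ` contains a usable
zero-run with respect to `t`, or `t` non-overlapping `11` substrings. -/
theorem weak_decoder_stops_even (t : ℕ) (ht : 2 ≤ t) (heven : Even t) (δ : List Bool)
    (hlen : ((t + 2) / 2) * ((t + 4) / 2) - 3 ≤ δ.length) :
    ExistsUsableRun t (false :: δ) ∨ t ≤ elevenCount (false :: δ) := by
  by_contra hcon
  push_neg at hcon
  exact final_test t ht heven δ hlen hcon.1
end

section
/- Fix t = 1 and m = 2. There is no decoding function D : 𝔽₂ → {1, 2} (from the single-bit difference vector to a round index) such that for every single fault among I(1), I(2), II(1), II(2), the declared round D(δ) is a correct round, where for fault I(i) a round j is correct iff j ≠ i, and for fault II(i) every round is correct. In particular, 2 rounds of syndrome measurement are insufficient for the strongly 1-fault-tolerant adaptive protocol, while 3 rounds suffice. -/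
/-- Difference vector (1 bit, 2 rounds) of a Type-I fault in round `i ∈ {1,2}`:
both `I(1)` and `I(2)` flip the single difference bit. -/
def diffI2 (_ : ℕ) : Bool := true

/-- Difference vector (2 bits, 3 rounds) of a Type-I fault in round `i ∈ {1,2,3}`. -/
def diffI3 (i : ℕ) : Bool × Bool := (decide (i ≤ 2), decide (2 ≤ i))

/-- Two rounds are insufficient for the `t = 1` strong adaptive decoder: no decoding
function from the single-bit difference vector to a round index is correct for every
single fault (for `I(i)` a round `j` is correct iff `j ≠ i`; `II` faults impose no
constraint) — while three rounds suffice. -/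
theorem two_rounds_insufficient :
    (¬ ∃ D : Bool → ℕ, (∀ δ, D δ = 1 ∨ D δ = 2) ∧
        ∀ i, 1 ≤ i → i ≤ 2 → D (diffI2 i) ≠ i) ∧
    (∃ D : Bool × Bool → ℕ, (∀ δ, 1 ≤ D δ ∧ D δ ≤ 3) ∧
        ∀ i, 1 ≤ i → i ≤ 3 → D (diffI3 i) ≠ i) := by
  constructor
  · rintro ⟨D, hD, hne⟩
    rcases hD true with h | h
    · exact hne 1 le_rfl (by norm_num) (by simpa [diffI2] using h)
    · exact hne 2 (by norm_num) le_rfl (by simpa [diffI2] using h)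
  · refine ⟨fun p => if p.1 && p.2 then 1 else if p.1 then 3 else 1, ?_, ?_⟩
    · rintro ⟨a, b⟩ <;> cases a <;> cases b <;> simp
    · intro i h1 h3
      interval_cases i <;> simp [diffI3]
end
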